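/- arXiv:2401.11701 — 10 statements merged into one kernel-verified Lean document; each statement's English description precedes it below -/
import Mathlib

section
/- If S is an integrable real random variable with a strictly positive Lebesgue density on the set where its CDF lies in (0,1), then the Expected Shortfall at level α ∈ (0,1), defined as ES_α(S) = (1/(1-α)) ∫_α^1 VaR_β(S) dβ, equals the conditional expectation E[S | S ≥ VaR_α(S)]. -/
open MeasureTheory ProbabilityTheory Set

variable {Ω : Type*} [MeasureSpace Ω]

/-- Value-at-Risk at level `α`. -/
noncomputable def VaR (α : ℝ) (S : Ω → ℝ) : ℝ :=
  sInf {x : ℝ | α ≤ (ℙ {ω | S ω ≤ x}).toReal}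

/-- ES_α(S) = (1/(1-α)) ∫_α^1 VaR_β(S) dβ equals E[S | S ≥ VaR_α(S)]. -/
theorem stmt0 [IsProbabilityMeasure (ℙ : Measure Ω)]
    (S : Ω → ℝ) (hSmeas : Measurable S) (hSint : Integrable S ℙ)
    (F : ℝ → ℝ) (hF : ∀ x, F x = (ℙ {ω | S ω ≤ x}).toReal)
    (hcont : Continuous F)
    (hmono : StrictMonoOn F {x | F x ∈ Ioo 0 1})
    (α : ℝ) (hα : α ∈ Ioo (0:ℝ) 1) :
    (1 - α)⁻¹ * (∫ β in Ioo α 1, VaR β S)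
      = (∫ ω in {ω | VaR α S ≤ S ω}, S ω) / (ℙ {ω | VaR α S ≤ S ω}).toReal := by
  obtain ⟨hα0, hα1⟩ := hα
  set μ : Measure ℝ := Measure.map S ℙ with hμdef
  have hprob : IsProbabilityMeasure μ := Measure.isProbabilityMeasure_map hSmeas.aemeasurable
  have hFeq : ∀ x, F x = cdf μ x := by
    intro x
    rw [hF, cdf_eq_real, hμdef, measureReal_def, Measure.map_apply hSmeas measurableSet_Iic]
    rfl
  have hFfun : F = ⇑(cdf μ) := funext hFeq
  have hFmono : Monotone F := hFfun ▸ monotone_cdf μ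
  have hFle1 : ∀ x, F x ≤ 1 := fun x => (hFeq x) ▸ cdf_le_one μ x
  have hVaRdef : ∀ β : ℝ, VaR β S = sInf {x | β ≤ F x} := by
    intro β; unfold VaR; simp_rw [← hF]
  -- key properties of VaR at levels in (0,1)
  have key : ∀ β : ℝ, β ∈ Ioo (0:ℝ) 1 →
      F (VaR β S) = β ∧ ∀ t, (VaR β S ≤ t ↔ β ≤ F t) := by
    intro β hβ
    obtain ⟨hβ0, hβ1⟩ := hβ
    obtain ⟨a, ha⟩ : ∃ a, F a < β := by
      have h := hFfun ▸ tendsto_cdf_atBot μ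
      exact (h.eventually_lt_const hβ0).exists
    obtain ⟨b, hb⟩ : ∃ b, β < F b := by
      have h := hFfun ▸ tendsto_cdf_atTop μ
      exact (h.eventually_const_lt hβ1).exists
    obtain ⟨x₀, hx₀⟩ : ∃ x, F x = β := by
      have h1 : F (min a b) ≤ F a := hFmono (min_le_left a b)
      have h2 : F b ≤ F (max a b) := hFmono (le_max_right a b)
      have hmem : β ∈ Icc (F (min a b)) (F (max a b)) :=
        ⟨h1.trans ha.le, hb.le.trans h2⟩
      obtain ⟨x, _, hfx⟩ := intermediate_value_Icc min_le_max hcont.continuousOn hmem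
      exact ⟨x, hfx⟩
    have hAbdd : BddBelow {x | β ≤ F x} := by
      refine ⟨a, fun x hx => ?_⟩
      by_contra h
      push_neg at h
      exact absurd hx (not_le.mpr ((hFmono h.le).trans_lt ha))
    have hAne : Set.Nonempty {x | β ≤ F x} := ⟨x₀, hx₀.ge⟩
    have hAclosed : IsClosed {x | β ≤ F x} := isClosed_le continuous_const hcont
    have hmem : β ≤ F (sInf {x | β ≤ F x}) := hAclosed.csInf_mem hAne hAbdd
    have hle : sInf {x | β ≤ F x} ≤ x₀ := csInf_le hAbdd hx₀.ge
    rw [hVaRdef β]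
    refine ⟨le_antisymm ((hFmono hle).trans_eq hx₀) hmem, fun t => ⟨fun h => hmem.trans (hFmono h),
      fun h => csInf_le hAbdd h⟩⟩
  have hFv : F (VaR α S) = α := (key α ⟨hα0, hα1⟩).1
  have hlimv : Function.leftLim (⇑(cdf μ)) (VaR α S) = α := by
    have h := leftLim_eq_of_tendsto (f := ⇑(cdf μ)) (a := VaR α S) (y := cdf μ (VaR α S))
      (by rw [← hFfun]; exact (hcont.tendsto _).mono_left nhdsWithin_le_nhds)
    rw [h, ← hFeq, hFv]
  -- monotonicity and measurability of the quantile function on (α, 1)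
  have hsub : Ioo α (1:ℝ) ⊆ Ioo (0:ℝ) 1 := fun x hx => ⟨hα0.trans hx.1, hx.2⟩
  have hq_mono : MonotoneOn (fun β => VaR β S) (Ioo α 1) := by
    intro β hβ β' hβ' hββ'
    exact ((key β (hsub hβ)).2 (VaR β' S)).mpr (hββ'.trans_eq (key β' (hsub hβ')).1.symm)
  have hqae : AEMeasurable (fun β => VaR β S) (volume.restrict (Ioo α 1)) :=
    aemeasurable_restrict_of_monotoneOn measurableSet_Ioo hq_mono
  -- the pushforward of Lebesgue on (α,1) under the quantile function
  have hmap : (volume.restrict (Ioo α 1)).map (fun β => VaR β S)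
      = μ.restrict (Ici (VaR α S)) := by
    have h1 : IsFiniteMeasure ((volume.restrict (Ioo α 1)).map (fun β => VaR β S)) := by
      constructor
      rw [Measure.map_apply_of_aemeasurable hqae MeasurableSet.univ, preimage_univ,
        Measure.restrict_apply_univ]
      simp [Real.volume_Ioo]
    refine Measure.ext_of_Iic _ _ fun t => ?_
    rw [Measure.map_apply_of_aemeasurable hqae measurableSet_Iic,
      Measure.restrict_apply' measurableSet_Ioo, Measure.restrict_apply measurableSet_Iic]
    have hset : (fun β => VaR β S) ⁻¹' Iic t ∩ Ioo α 1 = Ioo α 1 ∩ Iic (F t) := by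
      ext β
      simp only [mem_inter_iff, mem_preimage, mem_Iic, mem_Ioo]
      constructor
      · rintro ⟨hqt, hβ⟩
        exact ⟨hβ, ((key β (hsub hβ)).2 t).mp hqt⟩
      · rintro ⟨hβ, hft⟩
        exact ⟨((key β (hsub hβ)).2 t).mpr hft, hβ⟩
    have hIcc : Iic t ∩ Ici (VaR α S) = Icc (VaR α S) t := by
      ext x; simp only [mem_inter_iff, mem_Iic, mem_Ici, mem_Icc]; tauto
    rw [hset, hIcc]
    have hμIcc : μ (Icc (VaR α S) t) = ENNReal.ofReal (F t - α) := by
      conv_lhs => rw [← measure_cdf μ]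
      rw [StieltjesFunction.measure_Icc, hlimv, hFeq]
    rw [hμIcc]
    -- volume of Ioo α 1 ∩ Iic (F t)
    rcases lt_or_ge (F t) 1 with h1t | h1t
    · have : Ioo α 1 ∩ Iic (F t) = Ioc α (F t) := by
        ext x
        simp only [mem_inter_iff, mem_Ioo, mem_Iic, mem_Ioc]
        exact ⟨fun ⟨⟨h1, _⟩, h3⟩ => ⟨h1, h3⟩, fun ⟨h1, h2⟩ => ⟨⟨h1, h2.trans_lt h1t⟩, h2⟩⟩
      rw [this, Real.volume_Ioc]
    · have ht1 : F t = 1 := le_antisymm (hFle1 t) h1t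
      have : Ioo α 1 ∩ Iic (F t) = Ioo α 1 := by
        rw [ht1]
        exact inter_eq_left.mpr (fun x hx => le_of_lt hx.2)
      rw [this, Real.volume_Ioo, ht1]
  -- numerator equality
  have hnum : ∫ β in Ioo α 1, VaR β S = ∫ ω in {ω | VaR α S ≤ S ω}, S ω := by
    have h1 : ∫ β in Ioo α 1, VaR β S
        = ∫ x, x ∂((volume.restrict (Ioo α 1)).map (fun β => VaR β S)) :=
      (integral_map hqae aestronglyMeasurable_id).symm
    rw [h1, hmap, hμdef]
    have h2 : ∫ x, x ∂((Measure.map S ℙ).restrict (Ici (VaR α S)))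
        = ∫ x in Ici (VaR α S), x ∂(Measure.map S ℙ) := rfl
    rw [h2, setIntegral_map (f := fun x : ℝ => x) measurableSet_Ici aestronglyMeasurable_id
      hSmeas.aemeasurable]
    rfl
  -- denominator equality
  have hden : ℙ {ω | VaR α S ≤ S ω} = ENNReal.ofReal (1 - α) := by
    have h0 : {ω | VaR α S ≤ S ω} = S ⁻¹' Ici (VaR α S) := rfl
    rw [h0, ← Measure.map_apply hSmeas measurableSet_Ici, ← hμdef]
    conv_lhs => rw [← measure_cdf μ]
    rw [StieltjesFunction.measure_Ici _ (tendsto_cdf_atTop μ), hlimv]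
  rw [hnum, hden, ENNReal.toReal_ofReal (by linarith), div_eq_inv_mul]
end

section
/- Mixture representation of the ESC scoring function: For φ : ℝ → ℝ convex differentiable with derivative φ', v ∈ ℝ, m ∈ ℝ, and x = (x_1,...,x_d) ∈ ℝ^d with s = x_1 + ... + x_d, the score S^ESC((m,v),x) = 1{s > v}(φ'(m)(m - x_j) - φ(m) + φ(x_j)) equals ∫_ℝ S_η((m,v),x) dφ'(η), where S_η((m,v),x) = 1{s > v}(x_j - η) if m ≤ η < x_j, S_η((m,v),x) = 1{s > v}(η - x_j) if x_j ≤ η < m, and S_η((m,v),x) = 0 otherwise. -/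
open MeasureTheory Set

/-- Elementary scoring function for the `j`-th ES contribution. -/
noncomputable def elemESC {d : ℕ} (j : Fin d) (m v η : ℝ) (x : Fin d → ℝ) : ℝ :=
  if v < ∑ i, x i then
    if m ≤ η ∧ η < x j then x j - η
    else if x j ≤ η ∧ η < m then η - x j
    else 0
  else 0

private lemma leftLim_eq_self' {f : StieltjesFunction ℝ} (hfc : Continuous f) (x : ℝ) :
    Function.leftLim f x = f x :=
  f.mono.continuousWithinAt_Iio_iff_leftLim_eq.mp hfc.continuousAt.continuousWithinAt

private lemma noAtoms' {f : StieltjesFunction ℝ} (hfc : Continuous f) : NoAtoms f.measure :=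
  ⟨fun a => by rw [f.measure_singleton, leftLim_eq_self' hfc, sub_self, ENNReal.ofReal_zero]⟩

private lemma keyA (φ φ' : ℝ → ℝ)
    (hderiv : ∀ y, HasDerivAt φ (φ' y) y)
    (hcont : Continuous φ')
    (f : StieltjesFunction ℝ) (hf : ∀ y, f y = φ' y)
    (a b : ℝ) (hab : a ≤ b) :
    ∫ η in Ico a b, (b - η) ∂f.measure = φ b - φ a - φ' a * (b - a) := by
  have hfeq : (f : ℝ → ℝ) = φ' := funext hf
  have hfc : Continuous f := by rw [hfeq]; exact hcont
  have hμ : NoAtoms f.measure := noAtoms' hfc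
  have hIco : ∫ η in Ico a b, (b - η) ∂f.measure = ∫ η in Ioc a b, (b - η) ∂f.measure :=
    setIntegral_congr_set (by haveI : NullSingletonClass f.measure := hμ; exact Ico_ae_eq_Ioc)
  have hint : IntegrableOn (fun η => b - η) (Ioc a b) f.measure :=
    (((continuous_const.sub continuous_id).continuousOn).integrableOn_compact
      isCompact_Icc).mono_set Ioc_subset_Icc_self
  have hnn : 0 ≤ᵐ[f.measure.restrict (Ioc a b)] (fun η => b - η) := by
    filter_upwards [ae_restrict_mem measurableSet_Ioc] with η hη
    simp [sub_nonneg, hη.2]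
  rw [hIco, hint.integral_eq_integral_meas_lt hnn]
  have hset : ∀ t : ℝ, 0 < t →
      (f.measure.restrict (Ioc a b)) {η | t < b - η} = ENNReal.ofReal (f (b - t) - f a) := by
    intro t ht
    have hs : {η : ℝ | t < b - η} = Iio (b - t) := by
      ext η; simp only [mem_setOf_eq, mem_Iio]; constructor <;> (intro; linarith)
    rw [hs, Measure.restrict_apply measurableSet_Iio]
    have : Iio (b - t) ∩ Ioc a b = Ioo a (b - t) := by
      ext η
      simp only [mem_inter_iff, mem_Iio, mem_Ioc, mem_Ioo]
      constructor
      · rintro ⟨h1, h2, h3⟩; exact ⟨h2, by linarith⟩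
      · rintro ⟨h1, h2⟩; exact ⟨by linarith, h1, by linarith⟩
    rw [this, f.measure_Ioo, leftLim_eq_self' hfc]
  have h1 : ∫ t in Ioi 0, (f.measure.restrict (Ioc a b)).real {η | t < b - η}
      = ∫ t in Ioc 0 (b - a), (f (b - t) - f a) := by
    rw [setIntegral_eq_of_subset_of_ae_diff_eq_zero nullMeasurableSet_Ioi
      Ioc_subset_Ioi_self ?_]
    · refine setIntegral_congr_fun measurableSet_Ioc fun t ht => ?_
      rw [measureReal_def, hset t ht.1, ENNReal.toReal_ofReal]
      have h2 : a ≤ b - t := by have := ht.2; linarith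
      have := f.mono h2
      linarith
    · refine Filter.Eventually.of_forall fun t ht => ?_
      simp only [mem_diff, mem_Ioi, mem_Ioc, not_and, not_le] at ht
      rw [measureReal_def, hset t ht.1]
      have h2 : b - t ≤ a := by have := ht.2 ht.1; linarith
      have := f.mono h2
      rw [ENNReal.ofReal_eq_zero.mpr (by linarith)]
      simp
  rw [h1]
  have h2 : ∫ t in Ioc 0 (b - a), (f (b - t) - f a)
      = ∫ t in (0:ℝ)..(b - a), (f (b - t) - f a) := by
    rw [intervalIntegral.integral_of_le (by linarith)]
  rw [h2, intervalIntegral.integral_comp_sub_left (fun s => f s - f a) b]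
  have hFTC : ∫ s in a..b, φ' s = φ b - φ a :=
    intervalIntegral.integral_eq_sub_of_hasDerivAt (fun y _ => hderiv y)
      (hcont.intervalIntegrable a b)
  have hInt : IntervalIntegrable (fun s => f s) volume a b := by
    rw [hfeq]; exact hcont.intervalIntegrable a b
  rw [show b - (b - a) = a by ring, sub_zero,
    intervalIntegral.integral_sub hInt intervalIntegrable_const,
    intervalIntegral.integral_const]
  simp only [hfeq, hFTC, smul_eq_mul]
  ring

private lemma keyB (φ φ' : ℝ → ℝ)
    (hderiv : ∀ y, HasDerivAt φ (φ' y) y)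
    (hmono : Monotone φ') (hcont : Continuous φ')
    (f : StieltjesFunction ℝ) (hf : ∀ y, f y = φ' y)
    (a b : ℝ) (hab : a ≤ b) :
    ∫ η in Ico a b, (η - a) ∂f.measure = φ' b * (b - a) - (φ b - φ a) := by
  have hfeq : (f : ℝ → ℝ) = φ' := funext hf
  have hfc : Continuous f := by rw [hfeq]; exact hcont
  have hint : IntegrableOn (fun η => b - η) (Ico a b) f.measure :=
    (((continuous_const.sub continuous_id).continuousOn).integrableOn_compact
      isCompact_Icc).mono_set Ico_subset_Icc_self
  have hconst : IntegrableOn (fun _ : ℝ => b - a) (Ico a b) f.measure := by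
    refine integrableOn_const (lt_top_iff_ne_top.mp ?_)
    exact lt_of_le_of_lt (measure_mono Ico_subset_Icc_self)
      (by rw [f.measure_Icc]; exact ENNReal.ofReal_lt_top)
  have hcongr : ∀ η ∈ Ico a b, η - a = (b - a) - (b - η) := fun η _ => by ring
  rw [setIntegral_congr_fun measurableSet_Ico hcongr, integral_sub hconst hint,
    setIntegral_const, keyA φ φ' hderiv hcont f hf a b hab]
  have hmeas : f.measure.real (Ico a b) = φ' b - φ' a := by
    rw [measureReal_def, f.measure_Ico, leftLim_eq_self' hfc, leftLim_eq_self' hfc, hf a, hf b,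
      ENNReal.toReal_ofReal (sub_nonneg.2 (hmono hab))]
  rw [hmeas, smul_eq_mul]
  ring

/-- Mixture representation of the ESC scoring function:
`S^ESC((m,v),x) = ∫_ℝ S_η((m,v),x) dφ'(η)`. -/
theorem stmt3 (d : ℕ) (j : Fin d) (φ φ' : ℝ → ℝ)
    (hconv : ConvexOn ℝ Set.univ φ)
    (hderiv : ∀ y, HasDerivAt φ (φ' y) y)
    (hmono : Monotone φ') (hcont : Continuous φ')
    (f : StieltjesFunction ℝ) (hf : ∀ y, f y = φ' y)
    (m v : ℝ) (x : Fin d → ℝ) :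
    (if v < ∑ i, x i then φ' m * (m - x j) - φ m + φ (x j) else 0)
      = ∫ η, elemESC j m v η x ∂f.measure := by
  by_cases h : v < ∑ i, x i
  · rw [if_pos h]
    have hpt : (fun η => elemESC j m v η x)
        = fun η => (Ico m (x j)).indicator (fun η => x j - η) η
          + (Ico (x j) m).indicator (fun η => η - x j) η := by
      funext η
      simp only [elemESC, if_pos h, indicator_apply, mem_Ico]
      split_ifs <;> simp_all <;> linarith
    rw [hpt]
    have hint1 : IntegrableOn (fun η => x j - η) (Ico m (x j)) f.measure :=
      (((continuous_const.sub continuous_id).continuousOn).integrableOn_compact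
        isCompact_Icc).mono_set Ico_subset_Icc_self
    have hint2 : IntegrableOn (fun η => η - x j) (Ico (x j) m) f.measure :=
      (((continuous_id.sub continuous_const).continuousOn).integrableOn_compact
        isCompact_Icc).mono_set Ico_subset_Icc_self
    rw [integral_add ((integrable_indicator_iff measurableSet_Ico).2 hint1)
      ((integrable_indicator_iff measurableSet_Ico).2 hint2),
      integral_indicator measurableSet_Ico, integral_indicator measurableSet_Ico]
    rcases le_or_gt m (x j) with hmx | hmx
    · rw [show Ico (x j) m = ∅ from Ico_eq_empty (not_lt.2 hmx)]
      rw [Measure.restrict_empty, integral_zero_measure,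
        keyA φ φ' hderiv hcont f hf m (x j) hmx]
      ring
    · rw [show Ico m (x j) = ∅ from Ico_eq_empty (not_lt.2 hmx.le)]
      rw [Measure.restrict_empty, integral_zero_measure,
        keyB φ φ' hderiv hmono hcont f hf (x j) m hmx.le]
      ring
  · simp [elemESC, h]
end

section
/- Pointwise ordering of expected elementary ESC scores: Let X be an integrable d-dimensional random vector with S = X_1 + ... + X_d, v ∈ ℝ with P(S > v) > 0, and fix j. For any forecasts m* < m and any η ∈ ℝ, E[S_η((m*,v),X)] - E[S_η((m,v),X)] = P(S > v)·(E[X_j | S > v] - η)·(1{m* ≤ η} - 1{m ≤ η}), which is nonnegative for all η whenever m ≤ E[X_j | S > v], and strictly positive for m* < η < min(m, E[X_j | S > v]). -/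
open MeasureTheory ProbabilityTheory Set

variable {Ω : Type*} [MeasureSpace Ω]

/-- Pointwise ordering of expected elementary ESC scores. -/
theorem stmt5 [IsProbabilityMeasure (ℙ : Measure Ω)]
    (d : ℕ) (X : Fin d → Ω → ℝ)
    (hXmeas : ∀ i, Measurable (X i)) (hXint : ∀ i, Integrable (X i) ℙ)
    (j : Fin d) (v : ℝ)
    (hv : 0 < (ℙ {ω | v < ∑ i, X i ω}).toReal)
    (m mstar : ℝ) (hmm : mstar < m) (η : ℝ) :
    (∫ ω, elemESC j mstar v η (fun i => X i ω)) - (∫ ω, elemESC j m v η (fun i => X i ω))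
        = (ℙ {ω | v < ∑ i, X i ω}).toReal
            * ((∫ ω in {ω | v < ∑ i, X i ω}, X j ω) / (ℙ {ω | v < ∑ i, X i ω}).toReal - η)
            * ((if mstar ≤ η then (1:ℝ) else 0) - (if m ≤ η then (1:ℝ) else 0))
    ∧ (m ≤ (∫ ω in {ω | v < ∑ i, X i ω}, X j ω) / (ℙ {ω | v < ∑ i, X i ω}).toReal →
        0 ≤ (∫ ω, elemESC j mstar v η (fun i => X i ω))
              - (∫ ω, elemESC j m v η (fun i => X i ω)))
    ∧ (mstar < η →
        η < min m ((∫ ω in {ω | v < ∑ i, X i ω}, X j ω) / (ℙ {ω | v < ∑ i, X i ω}).toReal) →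
        0 < (∫ ω, elemESC j mstar v η (fun i => X i ω))
              - (∫ ω, elemESC j m v η (fun i => X i ω))) := by
  set A : Set Ω := {ω | v < ∑ i, X i ω} with hA
  have hAmeas : MeasurableSet A :=
    measurableSet_lt measurable_const (Finset.measurable_sum _ fun i _ => hXmeas i)
  set P : ℝ := (ℙ A).toReal with hPdef
  set I : ℝ := ∫ ω in A, X j ω with hIdef
  have hP : 0 < P := hv
  have hmeas : ∀ μ : ℝ, Measurable (fun ω => elemESC j μ v η (fun i => X i ω)) := by
    intro μ
    have m1 : MeasurableSet {ω : Ω | μ ≤ η ∧ η < X j ω} :=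
      (MeasurableSet.const _).inter (measurableSet_lt measurable_const (hXmeas j))
    have m2 : MeasurableSet {ω : Ω | X j ω ≤ η ∧ η < μ} :=
      (measurableSet_le (hXmeas j) measurable_const).inter (MeasurableSet.const _)
    unfold elemESC
    exact Measurable.ite hAmeas
      (Measurable.ite m1 ((hXmeas j).sub measurable_const)
        (Measurable.ite m2 (measurable_const.sub (hXmeas j)) measurable_const))
      measurable_const
  have hint : ∀ μ : ℝ, Integrable (fun ω => elemESC j μ v η (fun i => X i ω)) ℙ := by
    intro μ
    refine Integrable.mono' ((hXint j).abs.add (integrable_const |η|))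
      (hmeas μ).aestronglyMeasurable ?_
    filter_upwards with ω
    have h1 : |X j ω - η| ≤ |X j ω| + |η| := by
      simpa [Real.norm_eq_abs] using norm_sub_le (X j ω) η
    have h2 : |η - X j ω| ≤ |X j ω| + |η| := by
      rw [abs_sub_comm]; exact h1
    have h3 : (0:ℝ) ≤ |X j ω| + |η| := add_nonneg (abs_nonneg _) (abs_nonneg _)
    unfold elemESC
    simp only [Real.norm_eq_abs]
    split_ifs <;> simpa using (by first | exact h1 | exact h2 | exact h3 :
      _ ≤ |X j ω| + |η|)
  have hpt : ∀ ω, elemESC j mstar v η (fun i => X i ω) - elemESC j m v η (fun i => X i ω)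
      = if mstar ≤ η ∧ η < m then A.indicator (fun ω => X j ω - η) ω else 0 := by
    intro ω
    have hmem : ω ∈ A ↔ v < ∑ i, X i ω := Iff.rfl
    simp only [elemESC, Set.indicator_apply, hmem]
    by_cases hs : v < ∑ i, X i ω <;> split_ifs <;> simp_all <;> linarith
  have hkey : (∫ ω, elemESC j mstar v η (fun i => X i ω))
      - (∫ ω, elemESC j m v η (fun i => X i ω))
      = if mstar ≤ η ∧ η < m then I - η * P else 0 := by
    rw [← integral_sub (hint mstar) (hint m)]
    by_cases hc : mstar ≤ η ∧ η < m
    · have heq : (fun ω => elemESC j mstar v η (fun i => X i ω)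
          - elemESC j m v η (fun i => X i ω)) = A.indicator (fun ω => X j ω - η) :=
        funext fun ω => (hpt ω).trans (if_pos hc)
      rw [heq, if_pos hc, integral_indicator hAmeas,
        integral_sub (hXint j).integrableOn (integrableOn_const (measure_lt_top _ _).ne)]
      simp [hIdef, hPdef, mul_comm, Measure.real]
    · have heq : (fun ω => elemESC j mstar v η (fun i => X i ω)
          - elemESC j m v η (fun i => X i ω)) = fun _ => 0 :=
        funext fun ω => (hpt ω).trans (if_neg hc)
      rw [heq, if_neg hc, integral_zero]
  refine ⟨?_, ?_, ?_⟩
  · rw [hkey]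
    by_cases h1 : mstar ≤ η <;> by_cases h2 : m ≤ η
    · have h3 : ¬ η < m := not_lt.2 h2
      simp [h1, h2, h3]
    · have h3 : η < m := not_le.1 h2
      simp only [h1, h3, and_true, if_true, h2, if_false, true_and, if_pos]
      field_simp
      ring
    · exfalso; push_neg at h1; linarith
    · have h3 : ¬ (mstar ≤ η ∧ η < m) := fun h => h1 h.1
      simp [h1, h2, h3]
  · intro hm
    rw [hkey]
    split_ifs with hc
    · rw [le_div_iff₀ hP] at hm
      nlinarith [hc.2]
    · exact le_refl 0
  · intro h1 h2
    obtain ⟨h2a, h2b⟩ := lt_min_iff.mp h2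
    have hc : mstar ≤ η ∧ η < m := ⟨h1.le, h2a⟩
    rw [hkey, if_pos hc]
    have := (lt_div_iff₀ hP).1 h2b
    linarith
end

section
/- Order sensitivity for correctly specified VaR: Let X ∈ ℝ^d be integrable with S = X_1+...+X_d, v ∈ ℝ with P(S > v) > 0, and set m̃ = E[X_j | S > v]. Let φ be strictly convex differentiable and S^ESC((m,v),x) = 1{s>v}(φ'(m)(m - x_j) - φ(m) + φ(x_j)). If m* < m ≤ m̃ or m̃ ≤ m < m*, then E[S^ESC((m,v),X)] < E[S^ESC((m*,v),X)]. -/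
open MeasureTheory ProbabilityTheory Set

variable {Ω : Type*} [MeasureSpace Ω]

/-- Tangent line lies strictly below a strictly convex differentiable function. -/
lemma tangent_lt {φ φ' : ℝ → ℝ} (hconv : StrictConvexOn ℝ Set.univ φ)
    (hderiv : ∀ y, HasDerivAt φ (φ' y) y) {a b : ℝ} (hab : a ≠ b) :
    φ a + φ' a * (b - a) < φ b := by
  rcases lt_or_gt_of_ne hab with h | h
  · have := hconv.lt_slope_of_hasDerivAt (mem_univ a) (mem_univ b) h (hderiv a)
    rw [slope_def_field, lt_div_iff₀ (by linarith : (0:ℝ) < b - a)] at this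
    linarith
  · have := hconv.slope_lt_of_hasDerivAt (mem_univ b) (mem_univ a) h (hderiv a)
    rw [slope_def_field, div_lt_iff₀ (by linarith : (0:ℝ) < a - b)] at this
    nlinarith
  
/-- Order sensitivity of the ESC score for correctly specified VaR. -/
theorem stmt6 [IsProbabilityMeasure (ℙ : Measure Ω)]
    (d : ℕ) (X : Fin d → Ω → ℝ)
    (hXmeas : ∀ i, Measurable (X i)) (hXint : ∀ i, Integrable (X i) ℙ)
    (j : Fin d) (v : ℝ)
    (hv : 0 < (ℙ {ω | v < ∑ i, X i ω}).toReal)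
    (φ φ' : ℝ → ℝ)
    (hconv : StrictConvexOn ℝ Set.univ φ)
    (hderiv : ∀ y, HasDerivAt φ (φ' y) y)
    (hint : ∀ m : ℝ, Integrable
      (fun ω => if v < ∑ i, X i ω then φ' m * (m - X j ω) - φ m + φ (X j ω) else 0) ℙ)
    (m mstar : ℝ)
    (hcase : (mstar < m ∧
        m ≤ (∫ ω in {ω | v < ∑ i, X i ω}, X j ω) / (ℙ {ω | v < ∑ i, X i ω}).toReal)
      ∨ ((∫ ω in {ω | v < ∑ i, X i ω}, X j ω) / (ℙ {ω | v < ∑ i, X i ω}).toReal ≤ m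
          ∧ m < mstar)) :
    (∫ ω, if v < ∑ i, X i ω then φ' m * (m - X j ω) - φ m + φ (X j ω) else 0)
      < ∫ ω, if v < ∑ i, X i ω then φ' mstar * (mstar - X j ω) - φ mstar + φ (X j ω) else 0 := by
  set A := {ω | v < ∑ i, X i ω} with hAdef
  have hA : MeasurableSet A :=
    measurableSet_lt measurable_const (Finset.measurable_sum _ fun i _ => hXmeas i)
  set p := (ℙ A).toReal with hp
  set I := ∫ ω in A, X j ω with hI
  set c1 := φ' m * m - φ m - (φ' mstar * mstar - φ mstar) with hc1
  set c2 := φ' m - φ' mstar with hc2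
  have hmne : m ≠ mstar := by rcases hcase with ⟨h, _⟩ | ⟨_, h⟩ <;> [exact h.ne'; exact h.ne]
  -- the difference of the two integrals
  rw [← sub_neg, ← integral_sub (hint m) (hint mstar)]
  have heq : (fun ω => (if v < ∑ i, X i ω then φ' m * (m - X j ω) - φ m + φ (X j ω) else 0)
      - (if v < ∑ i, X i ω then φ' mstar * (mstar - X j ω) - φ mstar + φ (X j ω) else 0))
      = A.indicator (fun ω => c1 - c2 * X j ω) := by
    funext ω
    by_cases hω : v < ∑ i, X i ω
    · have hωA : ω ∈ A := hω
      simp only [if_pos hω, Set.indicator_of_mem hωA, hc1, hc2]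
      ring
    · have hωA : ω ∉ A := hω
      simp [if_neg hω, Set.indicator_of_notMem hωA]
  rw [heq, integral_indicator hA]
  have hXjA : IntegrableOn (X j) A ℙ := (hXint j).integrableOn
  have hsplit : ∫ ω in A, (c1 - c2 * X j ω) = c1 * p - c2 * I := by
    rw [integral_sub (integrableOn_const (C := c1) (measure_ne_top _ _))
      (hXjA.const_mul c2), integral_const_mul, setIntegral_const]
    simp [hp, mul_comm, measureReal_def, hI]
  rw [hsplit]
  -- now reduce to pure arithmetic
  set t := I / p with ht
  have hpne : p ≠ 0 := ne_of_gt hv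
  have hIt : I = t * p := by rw [ht, div_mul_cancel₀ I hpne]
  rw [hIt]
  have key : c1 - c2 * t < 0 := by
    have h1 : φ mstar + φ' mstar * (m - mstar) < φ m :=
      tangent_lt hconv hderiv (Ne.symm hmne)
    have h2 : φ m + φ' m * (mstar - m) < φ mstar :=
      tangent_lt hconv hderiv hmne
    rcases hcase with ⟨hlt, hle⟩ | ⟨hle, hlt⟩
    · -- mstar < m ≤ t, so φ' mstar < φ' m and m - t ≤ 0
      have hmono : φ' mstar < φ' m := by nlinarith
      have hmt : m - t ≤ 0 := by linarith
      have : c1 - c2 * t < c2 * (m - t) := by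
        simp only [hc1, hc2]; nlinarith
      nlinarith
    · -- t ≤ m < mstar, so φ' m < φ' mstar and m - t ≥ 0
      have hmono : φ' m < φ' mstar := by nlinarith
      have hmt : 0 ≤ m - t := by linarith
      have : c1 - c2 * t < c2 * (m - t) := by
        simp only [hc1, hc2]; nlinarith
      nlinarith
  nlinarith
end

section
/- The expected ESC score m ↦ E[1{S>v}(φ'(m)(m - X_j) - φ(m) + φ(X_j))] is uniquely minimized over m ∈ ℝ at m = E[X_j | S > v], provided P(S > v) > 0 and φ is strictly convex and differentiable. -/
open MeasureTheory ProbabilityTheory Set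

variable {Ω : Type*} [MeasureSpace Ω]

/-- The expected ESC score is uniquely minimized at `m = E[X_j | S > v]`. -/
theorem stmt7 [IsProbabilityMeasure (ℙ : Measure Ω)]
    (d : ℕ) (X : Fin d → Ω → ℝ)
    (hXmeas : ∀ i, Measurable (X i)) (hXint : ∀ i, Integrable (X i) ℙ)
    (j : Fin d) (v : ℝ)
    (hv : 0 < (ℙ {ω | v < ∑ i, X i ω}).toReal)
    (φ φ' : ℝ → ℝ)
    (hconv : StrictConvexOn ℝ Set.univ φ)
    (hderiv : ∀ y, HasDerivAt φ (φ' y) y)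
    (hint : ∀ m : ℝ, Integrable
      (fun ω => if v < ∑ i, X i ω then φ' m * (m - X j ω) - φ m + φ (X j ω) else 0) ℙ) :
    ∀ m : ℝ,
      m ≠ (∫ ω in {ω | v < ∑ i, X i ω}, X j ω) / (ℙ {ω | v < ∑ i, X i ω}).toReal →
      (∫ ω, if v < ∑ i, X i ω then
          φ' ((∫ ω' in {ω' | v < ∑ i, X i ω'}, X j ω') / (ℙ {ω' | v < ∑ i, X i ω'}).toReal)
              * ((∫ ω' in {ω' | v < ∑ i, X i ω'}, X j ω') / (ℙ {ω' | v < ∑ i, X i ω'}).toReal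
                  - X j ω)
            - φ ((∫ ω' in {ω' | v < ∑ i, X i ω'}, X j ω') / (ℙ {ω' | v < ∑ i, X i ω'}).toReal)
            + φ (X j ω)
        else 0)
        < ∫ ω, if v < ∑ i, X i ω then φ' m * (m - X j ω) - φ m + φ (X j ω) else 0 := by
  intro m hm
  set A : Set Ω := {ω | v < ∑ i, X i ω} with hAdef
  have hA : MeasurableSet A := by
    apply measurableSet_lt measurable_const
    exact Finset.measurable_sum _ fun i _ => hXmeas i
  set p : ℝ := (ℙ A).toReal with hpdef
  set μ : ℝ := (∫ ω in A, X j ω) / p with hμdef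
  -- key convexity inequality
  have hkey : 0 < φ' m * (m - μ) - φ m + φ μ := by
    rcases lt_or_gt_of_ne hm with h | h
    · have := hconv.lt_slope_of_hasDerivAt (mem_univ m) (mem_univ μ) h (hderiv m)
      rw [slope_def_field] at this
      have hd : 0 < μ - m := by linarith
      rw [lt_div_iff₀ hd] at this
      nlinarith
    · have := hconv.slope_lt_of_hasDerivAt (mem_univ μ) (mem_univ m) h (hderiv m)
      rw [slope_def_field] at this
      have hd : 0 < m - μ := by linarith
      rw [div_lt_iff₀ hd] at this
      nlinarith
  rw [← sub_pos, ← integral_sub (hint m) (hint μ)]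
  have heq : (fun ω => (if v < ∑ i, X i ω then φ' m * (m - X j ω) - φ m + φ (X j ω) else 0)
      - (if v < ∑ i, X i ω then φ' μ * (μ - X j ω) - φ μ + φ (X j ω) else 0))
      = A.indicator (fun ω => (φ' m * m - φ m - (φ' μ * μ - φ μ))
          - (φ' m - φ' μ) * X j ω) := by
    funext ω
    by_cases hω : v < ∑ i, X i ω
    · have hωA : ω ∈ A := hω
      simp only [if_pos hω, Set.indicator_of_mem hωA]
      ring
    · have hωA : ω ∉ A := hω
      simp only [if_neg hω, Set.indicator_of_notMem hωA, sub_zero]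
  rw [heq, integral_indicator hA]
  have hXjA : IntegrableOn (X j) A ℙ := (hXint j).integrableOn
  rw [integral_sub (integrableOn_const (C := φ' m * m - φ m - (φ' μ * μ - φ μ)) (s := A) (μ := ℙ))
    (hXjA.const_mul _)]
  rw [integral_const, integral_const_mul, smul_eq_mul, measureReal_restrict_apply_univ, measureReal_def]
  have hIA : ∫ ω in A, X j ω = μ * p := by
    rw [hμdef, div_mul_cancel₀]
    exact ne_of_gt hv
  rw [hIA]
  have : (ℙ A).toReal * (φ' m * m - φ m - (φ' μ * μ - φ μ)) - (φ' m - φ' μ) * (μ * p)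
      = p * (φ' m * (m - μ) - φ m + φ μ) := by
    rw [← hpdef]; ring
  rw [this]
  exact mul_pos hv hkey
end

section
/- Strict consistency of the generalized pinball loss: Let S be an integrable random variable with continuous strictly increasing CDF, α ∈ (0,1), and h : ℝ → ℝ strictly increasing with E|h(S)| < ∞. Then v ↦ E[(1{S ≤ v} - α)(h(v) - h(S))] is uniquely minimized at v = VaR_α(S). -/
open MeasureTheory ProbabilityTheory Set

variable {Ω : Type*} [MeasureSpace Ω]

section Aux

variable [IsProbabilityMeasure (ℙ : Measure Ω)]

lemma aux_integrable (S : Ω → ℝ) (hS : Measurable S) (h : ℝ → ℝ)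
    (hhint : Integrable (fun ω => h (S ω)) ℙ) (α v : ℝ) :
    Integrable (fun ω => ((if S ω ≤ v then (1:ℝ) else 0) - α) * (h v - h (S ω))) ℙ := by
  refine Integrable.bdd_mul (c := 1 + |α|) ((integrable_const (h v)).sub hhint) ?_ (Filter.Eventually.of_forall ?_)
  · refine (Measurable.sub ?_ measurable_const).aestronglyMeasurable
    exact Measurable.ite (measurableSet_le hS measurable_const) measurable_const
      measurable_const
  · intro x
    have : ‖(if S x ≤ v then (1:ℝ) else 0) - α‖ ≤ ‖(if S x ≤ v then (1:ℝ) else 0)‖ + ‖α‖ :=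
      norm_sub_le _ _
    refine this.trans ?_
    have : ‖(if S x ≤ v then (1:ℝ) else 0)‖ ≤ 1 := by
      split_ifs <;> simp
    simp only [Real.norm_eq_abs] at *
    linarith

lemma aux_measure_Ioc (S : Ω → ℝ) (hS : Measurable S) {a b : ℝ} (hab : a ≤ b) :
    (ℙ {ω | a < S ω ∧ S ω ≤ b}).toReal
      = (ℙ {ω | S ω ≤ b}).toReal - (ℙ {ω | S ω ≤ a}).toReal := by
  have hmeasb : MeasurableSet {ω | S ω ≤ b} := measurableSet_le hS measurable_const
  have hmeasm : MeasurableSet {ω | a < S ω ∧ S ω ≤ b} :=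
    (measurableSet_lt measurable_const hS).inter (measurableSet_le hS measurable_const)
  have hunion : {ω | S ω ≤ b} = {ω | S ω ≤ a} ∪ {ω | a < S ω ∧ S ω ≤ b} := by
    ext ω
    simp only [mem_setOf_eq, mem_union]
    constructor
    · intro hb
      rcases le_or_gt (S ω) a with h1 | h1
      · exact Or.inl h1
      · exact Or.inr ⟨h1, hb⟩
    · rintro (h1 | ⟨_, h1⟩)
      · exact h1.trans hab
      · exact h1
  have hdisj : Disjoint {ω | S ω ≤ a} {ω | a < S ω ∧ S ω ≤ b} := by
    rw [Set.disjoint_left]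
    rintro ω h1 ⟨h2, _⟩
    exact absurd h1 (not_le.mpr h2)
  have := measure_union (μ := (ℙ : Measure Ω)) hdisj hmeasm
  rw [← hunion] at this
  rw [this, ENNReal.toReal_add (measure_ne_top _ _) (measure_ne_top _ _)]
  ring

end Aux

/-- Strict consistency of the generalized pinball loss:
`v ↦ E[(1{S ≤ v} - α)(h(v) - h(S))]` is uniquely minimized at `v = VaR_α(S)`. -/
theorem stmt8 [IsProbabilityMeasure (ℙ : Measure Ω)]
    (S : Ω → ℝ) (hSmeas : Measurable S) (hSint : Integrable S ℙ)
    (F : ℝ → ℝ) (hF : ∀ x, F x = (ℙ {ω | S ω ≤ x}).toReal)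
    (hcont : Continuous F)
    (hmono : StrictMonoOn F {x | F x ∈ Ioo 0 1})
    (α : ℝ) (hα : α ∈ Ioo (0:ℝ) 1)
    (h : ℝ → ℝ) (hh : StrictMono h)
    (hhint : Integrable (fun ω => h (S ω)) ℙ) :
    ∀ v : ℝ, v ≠ VaR α S →
      (∫ ω, ((if S ω ≤ VaR α S then (1:ℝ) else 0) - α) * (h (VaR α S) - h (S ω)))
        < ∫ ω, ((if S ω ≤ v then (1:ℝ) else 0) - α) * (h v - h (S ω)) := by
  classical
  obtain ⟨hα0, hα1⟩ := hα
  -- Identify F with the cdf of the pushforward measure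
  set μ' : Measure ℝ := (ℙ : Measure Ω).map S with hμ'
  have hμ'prob : IsProbabilityMeasure μ' := Measure.isProbabilityMeasure_map hSmeas.aemeasurable
  have hFcdf : ∀ x, F x = cdf μ' x := by
    intro x
    rw [hF, cdf_eq_real, hμ', measureReal_def, Measure.map_apply hSmeas measurableSet_Iic]
    rfl
  -- Monotonicity of F
  have Fmono : Monotone F := by
    intro x y hxy
    rw [hF, hF]
    refine ENNReal.toReal_mono (measure_ne_top _ _) (measure_mono ?_)
    intro ω hω
    exact le_trans hω hxy
  have Fle1 : ∀ x, F x ≤ 1 := by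
    intro x
    rw [hF]
    exact ENNReal.toReal_le_of_le_ofReal zero_le_one (by simpa using prob_le_one)
  have F0le : ∀ x, 0 ≤ F x := fun x => by rw [hF]; exact ENNReal.toReal_nonneg
  -- The defining set of VaR
  set A : Set ℝ := {x : ℝ | α ≤ (ℙ {ω | S ω ≤ x}).toReal} with hA
  have hAF : A = {x : ℝ | α ≤ F x} := by
    ext x; simp [hA, hF]
  -- A is nonempty
  have hAne : A.Nonempty := by
    have h1 : ∀ᶠ x in Filter.atTop, α < cdf μ' x :=
      (tendsto_cdf_atTop μ').eventually (eventually_gt_nhds hα1)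
    obtain ⟨x, hx⟩ := h1.exists
    exact ⟨x, by rw [hA]; simp only [mem_setOf_eq]; rw [← hF x, hFcdf]; exact hx.le⟩
  -- there is a point where F < α
  have hx0 : ∃ x0, F x0 < α := by
    have h1 : ∀ᶠ x in Filter.atBot, cdf μ' x < α :=
      (tendsto_cdf_atBot μ').eventually (eventually_lt_nhds hα0)
    obtain ⟨x, hx⟩ := h1.exists
    exact ⟨x, by rw [hFcdf]; exact hx⟩
  obtain ⟨x0, hx0⟩ := hx0
  have hbdd : BddBelow A := by
    refine ⟨x0, fun y hy => ?_⟩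
    rw [hAF] at hy
    by_contra hc
    push_neg at hc
    exact absurd (le_trans hy (Fmono hc.le)) (not_le.mpr hx0)
  have hAclosed : IsClosed A := by
    rw [hAF]
    exact isClosed_le continuous_const hcont
  set v' : ℝ := VaR α S with hv'
  have hv'A : v' ∈ A := hAclosed.csInf_mem hAne hbdd
  have hv'le : α ≤ F v' := by rw [hAF] at hv'A; exact hv'A
  -- F v' = α
  have hFv' : F v' = α := by
    by_contra hne
    have hlt : α < F v' := lt_of_le_of_ne hv'le (Ne.symm hne)
    have hx0v' : x0 ≤ v' := by
      by_contra hc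
      push_neg at hc
      exact absurd (Fmono hc.le) (not_le.mpr (lt_trans hx0 hlt))
    obtain ⟨y, hy, hFy⟩ := intermediate_value_Icc hx0v' hcont.continuousOn
      (⟨hx0.le, hlt.le⟩ : α ∈ Icc (F x0) (F v'))
    have hyA : y ∈ A := by rw [hAF]; exact le_of_eq hFy.symm
    have : v' ≤ y := csInf_le hbdd hyA
    have : y = v' := le_antisymm hy.2 this
    rw [← this, hFy] at hlt
    exact lt_irrefl α hlt
  -- for m < v', F m < α
  have hFlt : ∀ m, m < v' → F m < α := by
    intro m hm
    by_contra hc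
    push_neg at hc
    have : m ∈ A := by rw [hAF]; exact hc
    exact absurd (csInf_le hbdd this) (not_le.mpr hm)
  -- for m > v', α < F m
  have hFgt : ∀ m, v' < m → α < F m := by
    intro m hm
    have h1 : α ≤ F m := hFv' ▸ Fmono hm.le
    rcases lt_or_ge (F m) 1 with h2 | h2
    · have hv'mem : v' ∈ {x | F x ∈ Ioo 0 1} := by
        simp only [mem_setOf_eq, hFv']
        exact ⟨hα0, hα1⟩
      have hmmem : m ∈ {x | F x ∈ Ioo 0 1} := by
        simp only [mem_setOf_eq]
        exact ⟨lt_of_lt_of_le hα0 h1, h2⟩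
      have := hmono hv'mem hmmem hm
      rwa [hFv'] at this
    · have : F m = 1 := le_antisymm (Fle1 m) h2
      rw [this]; exact hα1
  -- notation for the loss integrand
  set g : ℝ → Ω → ℝ := fun v ω => ((if S ω ≤ v then (1:ℝ) else 0) - α) * (h v - h (S ω))
    with hg
  have hgint : ∀ v, Integrable (g v) ℙ := fun v =>
    aux_integrable S hSmeas h hhint α v
  -- measurable sets
  have hmeasM : ∀ a b : ℝ, MeasurableSet {ω | a < S ω ∧ S ω ≤ b} := fun a b =>
    (measurableSet_lt measurable_const hSmeas).inter (measurableSet_le hSmeas measurable_const)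
  have hmeasIic : ∀ a : ℝ, MeasurableSet {ω | S ω ≤ a} := fun a =>
    measurableSet_le hSmeas measurable_const
  -- probability of mid set
  have hPM : ∀ a b : ℝ, a ≤ b → (ℙ {ω | a < S ω ∧ S ω ≤ b}).toReal = F b - F a := by
    intro a b hab
    rw [aux_measure_Ioc S hSmeas hab, hF, hF]
  -- THE SPLIT LEMMA
  have hsplit : ∀ v1 v2 : ℝ, v1 ≤ v2 →
      ∫ ω, g v2 ω = (∫ ω, g v1 ω) + (F v1 - α) * (h v2 - h v1)
        + ∫ ω, ({ω | v1 < S ω ∧ S ω ≤ v2}.indicator (fun ω => h v2 - h (S ω)) ω) := by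
    intro v1 v2 h12
    have hptwise : ∀ ω, g v2 ω = g v1 ω
        + ({ω | S ω ≤ v1}.indicator (fun _ => h v2 - h v1) ω - α * (h v2 - h v1))
        + ({ω | v1 < S ω ∧ S ω ≤ v2}.indicator (fun ω => h v2 - h (S ω)) ω) := by
      intro ω
      simp only [hg, Set.indicator_apply, mem_setOf_eq]
      rcases le_or_gt (S ω) v1 with h1 | h1
      · have h2 : S ω ≤ v2 := h1.trans h12
        rw [if_pos h1, if_pos h2, if_neg (fun hc : v1 < S ω ∧ S ω ≤ v2 =>
          absurd h1 (not_le.mpr hc.1))]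
        rw [if_pos h1]
        ring
      · rcases le_or_gt (S ω) v2 with h2 | h2
        · rw [if_neg (not_le.mpr h1), if_pos h2,
            if_pos (show v1 < S ω ∧ S ω ≤ v2 from ⟨h1, h2⟩)]
          rw [if_neg (not_le.mpr h1)]
          ring
        · rw [if_neg (not_le.mpr h1), if_neg (not_le.mpr h2),
            if_neg (fun hc : v1 < S ω ∧ S ω ≤ v2 => absurd hc.2 (not_le.mpr h2))]
          rw [if_neg (not_le.mpr h1)]
          ring
    have hint2 : Integrable (fun ω => {ω | S ω ≤ v1}.indicator
        (fun _ => h v2 - h v1) ω - α * (h v2 - h v1)) ℙ :=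
      ((integrable_const _).indicator (hmeasIic v1)).sub (integrable_const _)
    have hint3 : Integrable (fun ω => {ω | v1 < S ω ∧ S ω ≤ v2}.indicator
        (fun ω => h v2 - h (S ω)) ω) ℙ :=
      (((integrable_const (h v2)).sub hhint).indicator (hmeasM v1 v2))
    calc ∫ ω, g v2 ω = ∫ ω, (g v1 ω
        + ({ω | S ω ≤ v1}.indicator (fun _ => h v2 - h v1) ω - α * (h v2 - h v1))
        + ({ω | v1 < S ω ∧ S ω ≤ v2}.indicator (fun ω => h v2 - h (S ω)) ω)) := by
          exact integral_congr_ae (Filter.Eventually.of_forall hptwise)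
    _ = (∫ ω, g v1 ω) + (F v1 - α) * (h v2 - h v1)
        + ∫ ω, ({ω | v1 < S ω ∧ S ω ≤ v2}.indicator (fun ω => h v2 - h (S ω)) ω) := by
          have hint12 : Integrable (fun ω => g v1 ω
              + ({ω | S ω ≤ v1}.indicator (fun _ => h v2 - h v1) ω
                - α * (h v2 - h v1))) ℙ := (hgint v1).add hint2
          have hintA : Integrable (fun ω =>
              {ω | S ω ≤ v1}.indicator (fun _ => h v2 - h v1) ω) ℙ :=
            (integrable_const _).indicator (hmeasIic v1)
          have hintB : Integrable (fun _ : Ω => α * (h v2 - h v1)) ℙ := integrable_const _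
          rw [integral_add hint12 hint3, integral_add (hgint v1) hint2,
            integral_sub hintA hintB, integral_indicator_const _ (hmeasIic v1),
            integral_const]
          simp only [smul_eq_mul, measureReal_def, measure_univ, ENNReal.toReal_one, one_mul, ← hF]
          ring
  intro v hv
  rcases lt_or_gt_of_ne hv with hvlt | hvgt
  · -- case v < v' : show ∫ g v' < ∫ g v
    set m : ℝ := (v + v') / 2 with hm
    have hvm : v < m := by rw [hm]; linarith
    have hmv' : m < v' := by rw [hm]; linarith
    have hFm : F m < α := hFlt m hmv'
    have hFvα : F v < α := hFlt v (hvm.trans hmv')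
    rw [← hv'] at *
    rw [hsplit v v' hvlt.le]
    -- bound the indicator integral
    have hbound : ∫ ω, ({ω | v < S ω ∧ S ω ≤ v'}.indicator (fun ω => h v' - h (S ω)) ω)
        ≤ (F m - F v) * (h v' - h v) + (F v' - F m) * (h v' - h m) := by
      have hle : ∀ ω, ({ω | v < S ω ∧ S ω ≤ v'}.indicator (fun ω => h v' - h (S ω)) ω)
          ≤ ({ω | v < S ω ∧ S ω ≤ m}.indicator (fun _ => h v' - h v) ω)
            + ({ω | m < S ω ∧ S ω ≤ v'}.indicator (fun _ => h v' - h m) ω) := by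
        intro ω
        simp only [Set.indicator_apply, mem_setOf_eq]
        rcases le_or_gt (S ω) v with h1 | h1
        · rw [if_neg (fun hc : v < S ω ∧ S ω ≤ v' => absurd h1 (not_le.mpr hc.1)),
            if_neg (fun hc : v < S ω ∧ S ω ≤ m => absurd h1 (not_le.mpr hc.1)),
            if_neg (fun hc : m < S ω ∧ S ω ≤ v' => absurd h1 (not_le.mpr (hvm.trans hc.1)))]
          norm_num
        · rcases le_or_gt (S ω) m with h2 | h2
          · rw [if_pos ⟨h1, h2.trans hmv'.le⟩, if_pos ⟨h1, h2⟩,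
              if_neg (fun hc : m < S ω ∧ S ω ≤ v' => absurd h2 (not_le.mpr hc.1))]
            have := hh.monotone h1.le
            linarith
          · rcases le_or_gt (S ω) v' with h3 | h3
            · rw [if_pos ⟨h1, h3⟩, if_neg (fun hc : v < S ω ∧ S ω ≤ m =>
                absurd hc.2 (not_le.mpr h2)), if_pos ⟨h2, h3⟩]
              have := hh.monotone h2.le
              linarith
            · rw [if_neg (fun hc : v < S ω ∧ S ω ≤ v' => absurd hc.2 (not_le.mpr h3)),
                if_neg (fun hc : v < S ω ∧ S ω ≤ m => absurd hc.2 (not_le.mpr h2)),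
                if_neg (fun hc : m < S ω ∧ S ω ≤ v' => absurd hc.2 (not_le.mpr h3))]
              norm_num
      have hintL : Integrable (fun ω => {ω | v < S ω ∧ S ω ≤ v'}.indicator
          (fun ω => h v' - h (S ω)) ω) ℙ :=
        ((integrable_const (h v')).sub hhint).indicator (hmeasM v v')
      have hintR : Integrable (fun ω => ({ω | v < S ω ∧ S ω ≤ m}.indicator
          (fun _ => h v' - h v) ω) + ({ω | m < S ω ∧ S ω ≤ v'}.indicator
          (fun _ => h v' - h m) ω)) ℙ :=
        ((integrable_const _).indicator (hmeasM v m)).add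
          ((integrable_const _).indicator (hmeasM m v'))
      have := integral_mono hintL hintR hle
      rwa [integral_add ((integrable_const _).indicator (hmeasM v m))
        ((integrable_const _).indicator (hmeasM m v')),
        integral_indicator_const _ (hmeasM v m), integral_indicator_const _ (hmeasM m v'),
        smul_eq_mul, smul_eq_mul, measureReal_def, measureReal_def, hPM v m hvm.le, hPM m v' hmv'.le] at this
    have hhvm : h v < h m := hh hvm
    have hhmv' : h m < h v' := hh hmv'
    have key : (F v - α) * (h v' - h v)
        + ((F m - F v) * (h v' - h v) + (F v' - F m) * (h v' - h m)) < 0 := by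
      rw [hFv']
      nlinarith [hFm, hFvα, hhvm, hhmv']
    linarith [hbound]
  · -- case v > v' : show ∫ g v' < ∫ g v
    set m : ℝ := (v' + v) / 2 with hm
    have hv'm : v' < m := by rw [hm]; linarith
    have hmv : m < v := by rw [hm]; linarith
    have hFm : α < F m := hFgt m hv'm
    rw [← hv'] at *
    rw [hsplit v' v hvgt.le, hFv', sub_self, zero_mul, add_zero]
    -- the indicator integral is strictly positive
    have hbound : (F m - F v') * (h v - h m)
        ≤ ∫ ω, ({ω | v' < S ω ∧ S ω ≤ v}.indicator (fun ω => h v - h (S ω)) ω) := by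
      have hle : ∀ ω, ({ω | v' < S ω ∧ S ω ≤ m}.indicator (fun _ => h v - h m) ω)
          ≤ ({ω | v' < S ω ∧ S ω ≤ v}.indicator (fun ω => h v - h (S ω)) ω) := by
        intro ω
        simp only [Set.indicator_apply, mem_setOf_eq]
        rcases le_or_gt (S ω) v' with h1 | h1
        · rw [if_neg (fun hc : v' < S ω ∧ S ω ≤ m => absurd h1 (not_le.mpr hc.1)),
            if_neg (fun hc : v' < S ω ∧ S ω ≤ v => absurd h1 (not_le.mpr hc.1))]
        · rcases le_or_gt (S ω) m with h2 | h2
          · rw [if_pos ⟨h1, h2⟩, if_pos ⟨h1, h2.trans hmv.le⟩]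
            have := hh.monotone h2
            linarith
          · rw [if_neg (fun hc : v' < S ω ∧ S ω ≤ m => absurd hc.2 (not_le.mpr h2))]
            rcases le_or_gt (S ω) v with h3 | h3
            · rw [if_pos ⟨h1, h3⟩]
              have := hh.monotone h3
              linarith
            · rw [if_neg (fun hc : v' < S ω ∧ S ω ≤ v => absurd hc.2 (not_le.mpr h3))]
      have hintL : Integrable (fun ω => {ω | v' < S ω ∧ S ω ≤ m}.indicator
          (fun _ => h v - h m) ω) ℙ :=
        (integrable_const _).indicator (hmeasM v' m)
      have hintR : Integrable (fun ω => {ω | v' < S ω ∧ S ω ≤ v}.indicator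
          (fun ω => h v - h (S ω)) ω) ℙ :=
        ((integrable_const (h v)).sub hhint).indicator (hmeasM v' v)
      have := integral_mono hintL hintR hle
      rwa [integral_indicator_const _ (hmeasM v' m), smul_eq_mul,
        measureReal_def, hPM v' m hv'm.le] at this
    have hhmv : h m < h v := hh hmv
    have : 0 < (F m - F v') * (h v - h m) := by
      rw [hFv']
      nlinarith [hFm, hhmv]
    linarith [hbound]
end

section
/- Joint identification: Under the assumptions that S = X_1+...+X_d has continuous strictly increasing CDF and X is integrable, the map (m_1,...,m_d,v) ↦ (E[α - 1{S ≤ v}], E[1{S>v}(X_1 - m_1)], ..., E[1{S>v}(X_d - m_d)]) vanishes at exactly one point, namely v = VaR_α(S) and m_j = ESC_α(X_j,S) for all j. -/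
open MeasureTheory ProbabilityTheory Set

variable {Ω : Type*} [MeasureSpace Ω]

/-- Joint identification of the tuple of ES contributions together with total VaR:
the joint identification function vanishes exactly at
`v = VaR_α(S)` and `m_j = ESC_α(X_j,S)` for all `j`. -/
theorem stmt11 [IsProbabilityMeasure (ℙ : Measure Ω)]
    (d : ℕ) (X : Fin d → Ω → ℝ)
    (hXmeas : ∀ i, Measurable (X i)) (hXint : ∀ i, Integrable (X i) ℙ)
    (S : Ω → ℝ) (hS : ∀ ω, S ω = ∑ i, X i ω)
    (F : ℝ → ℝ) (hF : ∀ x, F x = (ℙ {ω | S ω ≤ x}).toReal)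
    (hcont : Continuous F)
    (hmono : StrictMonoOn F {x | F x ∈ Ioo 0 1})
    (α : ℝ) (hα : α ∈ Ioo (0:ℝ) 1) :
    ∀ (m : Fin d → ℝ) (v : ℝ),
      ((∫ ω, (α - if S ω ≤ v then (1:ℝ) else 0)) = 0
          ∧ ∀ j, (∫ ω, if v < S ω then X j ω - m j else 0) = 0)
      ↔ (v = VaR α S
          ∧ ∀ j, m j = (∫ ω in {ω | VaR α S < S ω}, X j ω)
              / (ℙ {ω | VaR α S < S ω}).toReal) := by
  intro m v
  -- measurability of S
  have hSm : Measurable S := by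
    have : S = fun ω => ∑ i, X i ω := funext hS
    rw [this]
    exact Finset.measurable_sum _ fun i _ => hXmeas i
  have hsle : ∀ x : ℝ, MeasurableSet {ω | S ω ≤ x} := fun x => hSm measurableSet_Iic
  have hslt : ∀ x : ℝ, MeasurableSet {ω | x < S ω} := fun x => hSm measurableSet_Ioi
  -- F agrees with the cdf of the law of S
  have hmap : IsProbabilityMeasure (Measure.map S ℙ) := Measure.isProbabilityMeasure_map hSm.aemeasurable
  have hFeq : ∀ x, F x = cdf (Measure.map S ℙ) x := by
    intro x
    rw [hF, cdf_eq_real, measureReal_def, Measure.map_apply hSm measurableSet_Iic]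
    rfl
  have hFmono : Monotone F := by
    intro a b hab
    rw [hFeq, hFeq]
    exact monotone_cdf _ hab
  have hFfun : F = fun x => cdf (Measure.map S ℙ) x := funext hFeq
  have hFtop : Filter.Tendsto F Filter.atTop (nhds 1) := by
    rw [hFfun]; exact tendsto_cdf_atTop _
  have hFbot : Filter.Tendsto F Filter.atBot (nhds 0) := by
    rw [hFfun]; exact tendsto_cdf_atBot _
  -- existence of a point where F equals α
  obtain ⟨a, ha⟩ : ∃ a, F a < α := (hFbot.eventually_lt_const hα.1).exists
  obtain ⟨b, hb⟩ : ∃ b, α < F b := (hFtop.eventually_const_lt hα.2).exists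
  have hab : a ≤ b := by
    by_contra h
    exact absurd (hFmono (le_of_not_ge h)) (not_le.2 (lt_trans ha hb))
  obtain ⟨v0, _, hv0⟩ := intermediate_value_Icc hab hcont.continuousOn ⟨ha.le, hb.le⟩
  -- uniqueness of that point
  have huniq : ∀ x, F x = α → x = v0 := by
    intro x hx
    rcases lt_trichotomy x v0 with h | h | h
    · have := hmono (by simp [hx, hα.1, hα.2]) (by simp [hv0, hα.1, hα.2]) h
      rw [hx, hv0] at this; exact absurd this (lt_irrefl α)
    · exact h
    · have := hmono (by simp [hv0, hα.1, hα.2]) (by simp [hx, hα.1, hα.2]) h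
      rw [hx, hv0] at this; exact absurd this (lt_irrefl α)
  -- identification of VaR
  have hVaRset : {x : ℝ | α ≤ (ℙ {ω | S ω ≤ x}).toReal} = {x | α ≤ F x} := by
    ext x; simp [hF]
  have hlow : ∀ x ∈ {x | α ≤ F x}, v0 ≤ x := by
    intro x hx
    by_contra h
    push_neg at h
    have h1 : F x ≤ α := hv0 ▸ hFmono h.le
    have h2 : F x = α := le_antisymm h1 hx
    exact absurd (huniq x h2) (ne_of_lt h)
  have hVaR : VaR α S = v0 := by
    rw [VaR, hVaRset]
    exact le_antisymm (csInf_le ⟨v0, hlow⟩ (by simp [hv0]))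
      (le_csInf ⟨v0, by simp [hv0]⟩ hlow)
  have hFVaR : F (VaR α S) = α := by rw [hVaR, hv0]
  -- tail probability
  have htail : ∀ x : ℝ, (ℙ {ω | x < S ω}).toReal = 1 - F x := by
    intro x
    have hc : {ω | x < S ω} = {ω | S ω ≤ x}ᶜ := by ext ω; simp
    rw [hc, measure_compl (hsle x) (measure_ne_top _ _), measure_univ,
      ENNReal.toReal_sub_of_le prob_le_one ENNReal.one_ne_top, ENNReal.toReal_one, hF]
  -- first integral computation
  have hindint : Integrable (fun ω => if S ω ≤ v then (1:ℝ) else 0) ℙ := by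
    have : (fun ω => if S ω ≤ v then (1:ℝ) else 0)
        = Set.indicator {ω | S ω ≤ v} (fun _ => (1:ℝ)) := by
      ext ω; simp [Set.indicator_apply]
    rw [this]
    exact (integrable_const 1).indicator (hsle v)
  have I1 : (∫ ω, (α - if S ω ≤ v then (1:ℝ) else 0)) = α - F v := by
    rw [integral_sub (integrable_const α) hindint]
    have : (fun ω => if S ω ≤ v then (1:ℝ) else 0)
        = Set.indicator {ω | S ω ≤ v} (fun _ => (1:ℝ)) := by
      ext ω; simp [Set.indicator_apply]
    rw [this, MeasureTheory.integral_indicator_const _ (hsle v), integral_const, hF]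
    simp
    rfl
  -- second integral computation
  have I2 : ∀ (j : Fin d) (c : ℝ), (∫ ω, if v < S ω then X j ω - c else 0)
      = (∫ ω in {ω | v < S ω}, X j ω) - c * (ℙ {ω | v < S ω}).toReal := by
    intro j c
    have h1 : (fun ω => if v < S ω then X j ω - c else 0)
        = Set.indicator {ω | v < S ω} (fun ω => X j ω - c) := by
      ext ω; simp [Set.indicator_apply]
    rw [h1, integral_indicator (hslt v),
      integral_sub ((hXint j).restrict) (integrable_const c), setIntegral_const,
      smul_eq_mul, measureReal_def]
    ring
  constructor
  · rintro ⟨h1, h2⟩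
    rw [I1, sub_eq_zero] at h1
    have hveq : v = v0 := huniq v h1.symm
    have hvVaR : v = VaR α S := by rw [hVaR, hveq]
    refine ⟨hvVaR, fun j => ?_⟩
    have h2j := h2 j
    rw [I2 j (m j), sub_eq_zero] at h2j
    have hP : (ℙ {ω | v < S ω}).toReal = 1 - α := by rw [htail, ← h1]
    have hPne : (ℙ {ω | v < S ω}).toReal ≠ 0 := by rw [hP]; linarith [hα.2]
    rw [← hvVaR]
    field_simp
    linarith [h2j]
  · rintro ⟨hvVaR, hm⟩
    have hFv : F v = α := by rw [hvVaR, hFVaR]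
    have hP : (ℙ {ω | v < S ω}).toReal = 1 - α := by rw [htail, hFv]
    have hPne : (ℙ {ω | v < S ω}).toReal ≠ 0 := by rw [hP]; linarith [hα.2]
    refine ⟨by rw [I1, hFv, sub_self], fun j => ?_⟩
    rw [I2 j (m j), hm j, ← hvVaR, sub_eq_zero]
    field_simp
end

section
/- Lexicographic multi-objective elicitability: Let X be integrable with S = X_1+...+X_d having continuous strictly increasing CDF, α ∈ (0,1), h strictly increasing, φ_j strictly convex differentiable (all with suitable integrability). Define the ℝ²-valued score S((m,v),x) = ((1{s≤v}-α)(h(v)-h(s)), Σ_j 1{s>v}(φ_j'(m_j)(m_j - x_j) - φ_j(m_j) + φ_j(x_j))). Then (m,v) ↦ E[S((m,v),X)] has a unique minimizer with respect to the lexicographic order on ℝ², namely m_j = ESC_α(X_j,S) for all j and v = VaR_α(S). -/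
open MeasureTheory ProbabilityTheory Set

lemma bregman_pos {f f' : ℝ → ℝ} (hf : StrictConvexOn ℝ Set.univ f)
    (hd : ∀ y, HasDerivAt f (f' y) y) {m e : ℝ} (hne : m ≠ e) :
    0 < f e - f m - f' m * (e - m) := by
  rcases hne.lt_or_gt with hlt | hlt
  · have h1 := hf.lt_slope_of_hasDerivAt (Set.mem_univ m) (Set.mem_univ e) hlt (hd m)
    rw [slope_def_field] at h1
    rw [lt_div_iff₀ (by linarith : (0:ℝ) < e - m)] at h1
    nlinarith
  · have h1 := hf.slope_lt_of_hasDerivAt (Set.mem_univ e) (Set.mem_univ m) hlt (hd m)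
    rw [slope_def_field] at h1
    rw [div_lt_iff₀ (by linarith : (0:ℝ) < m - e)] at h1
    nlinarith


variable {Ω : Type*} [MeasureSpace Ω]

/-- Lexicographic multi-objective elicitability: the expected ℝ²-valued score
has the tuple `(ESC_α(X_1,S),…,ESC_α(X_d,S), VaR_α(S))` as its unique minimizer
with respect to the lexicographic order on ℝ². -/
theorem stmt12 [IsProbabilityMeasure (ℙ : Measure Ω)]
    (d : ℕ) (X : Fin d → Ω → ℝ)
    (hXmeas : ∀ i, Measurable (X i)) (hXint : ∀ i, Integrable (X i) ℙ)
    (S : Ω → ℝ) (hS : ∀ ω, S ω = ∑ i, X i ω)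
    (F : ℝ → ℝ) (hF : ∀ x, F x = (ℙ {ω | S ω ≤ x}).toReal)
    (hcont : Continuous F)
    (hmono : StrictMonoOn F {x | F x ∈ Ioo 0 1})
    (α : ℝ) (hα : α ∈ Ioo (0:ℝ) 1)
    (h : ℝ → ℝ) (hh : StrictMono h)
    (hhint : Integrable (fun ω => h (S ω)) ℙ)
    (φ φ' : Fin d → ℝ → ℝ)
    (hconv : ∀ j, StrictConvexOn ℝ Set.univ (φ j))
    (hderiv : ∀ j y, HasDerivAt (φ j) (φ' j y) y)
    (hintVaR : ∀ v : ℝ,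
      Integrable (fun ω => ((if S ω ≤ v then (1:ℝ) else 0) - α) * (h v - h (S ω))) ℙ)
    (hintESC : ∀ (m : Fin d → ℝ) (v : ℝ),
      Integrable (fun ω => ∑ j, if v < S ω then
        φ' j (m j) * (m j - X j ω) - φ j (m j) + φ j (X j ω) else 0) ℙ)
    (ESC : Fin d → ℝ)
    (hESC : ∀ j, ESC j
      = (∫ ω in {ω | VaR α S < S ω}, X j ω) / (ℙ {ω | VaR α S < S ω}).toReal) :
    ∀ (m : Fin d → ℝ) (v : ℝ), (m, v) ≠ (ESC, VaR α S) →
      (toLex (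
          (∫ ω, ((if S ω ≤ VaR α S then (1:ℝ) else 0) - α) * (h (VaR α S) - h (S ω))),
          (∫ ω, ∑ j, if VaR α S < S ω then
            φ' j (ESC j) * (ESC j - X j ω) - φ j (ESC j) + φ j (X j ω) else 0)) : ℝ ×ₗ ℝ)
        < toLex (
          (∫ ω, ((if S ω ≤ v then (1:ℝ) else 0) - α) * (h v - h (S ω))),
          (∫ ω, ∑ j, if v < S ω then
            φ' j (m j) * (m j - X j ω) - φ j (m j) + φ j (X j ω) else 0)) := by
  intro m v hmv
  -- Basic measurability
  have Smeas : Measurable S := by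
    have hSe : S = fun ω => ∑ i, X i ω := funext hS
    rw [hSe]; exact Finset.measurable_sum _ fun i _ => hXmeas i
  have hsetm : ∀ x : ℝ, MeasurableSet {ω | S ω ≤ x} :=
    fun x => measurableSet_le Smeas measurable_const
  -- F is a CDF
  have hFeq : F = cdf (Measure.map S ℙ) := by
    funext x
    have : IsProbabilityMeasure (Measure.map S ℙ) :=
      Measure.isProbabilityMeasure_map Smeas.aemeasurable
    rw [hF, cdf_eq_real, measureReal_def, Measure.map_apply Smeas measurableSet_Iic]
    rfl
  have hFmono : Monotone F := by rw [hFeq]; exact monotone_cdf _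
  have hFtop : Filter.Tendsto F Filter.atTop (nhds 1) := by
    rw [hFeq]; exact tendsto_cdf_atTop _
  have hFbot : Filter.Tendsto F Filter.atBot (nhds 0) := by
    rw [hFeq]; exact tendsto_cdf_atBot _
  set u := VaR α S with hu
  have hμt : ∀ x, (ℙ {ω | S ω ≤ x}).toReal = F x := fun x => (hF x).symm
  -- u = sInf A
  have huInf : u = sInf {x | α ≤ F x} := by
    rw [hu]; unfold VaR; congr 1; ext x; simp only [mem_setOf_eq, hF]
  have hAne : {x | α ≤ F x}.Nonempty := (hFtop.eventually (eventually_ge_nhds hα.2)).exists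
  obtain ⟨x0, hx0⟩ := (hFbot.eventually (eventually_lt_nhds hα.1)).exists
  have hAbdd : BddBelow {x | α ≤ F x} := by
    refine ⟨x0, fun y hy => le_of_not_gt fun hlt => ?_⟩
    exact absurd hy (not_le.mpr (lt_of_le_of_lt (hFmono hlt.le) hx0))
  have hFu : F u = α := by
    have hAclosed : IsClosed {x | α ≤ F x} := isClosed_le continuous_const hcont
    have humem : u ∈ {x | α ≤ F x} := huInf ▸ hAclosed.csInf_mem hAne hAbdd
    refine le_antisymm ?_ humem
    have hb : ∀ x < u, F x < α := by
      intro x hx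
      by_contra hge
      exact absurd (huInf ▸ csInf_le hAbdd (not_lt.mp hge)) (not_le.mpr hx)
    have htend : Filter.Tendsto F (nhdsWithin u (Iio u)) (nhds (F u)) :=
      (hcont.tendsto u).mono_left nhdsWithin_le_nhds
    refine le_of_tendsto htend ?_
    filter_upwards [self_mem_nhdsWithin] with x hx using (hb x hx).le
  have hμT : (ℙ {ω | u < S ω}).toReal = 1 - α := by
    have hTc : {ω | u < S ω} = {ω | S ω ≤ u}ᶜ := by ext ω; simp [not_le]
    rw [hTc, measure_compl (hsetm u) (measure_ne_top _ _), measure_univ,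
      ENNReal.toReal_sub_of_le prob_le_one ENNReal.one_ne_top, ENNReal.toReal_one, hμt, hFu]
  -- Formula for the first component
  have hG : ∀ w : ℝ, (∫ ω, ((if S ω ≤ w then (1:ℝ) else 0) - α) * (h w - h (S ω)))
      = (F w - α) * h w - (∫ ω in {ω | S ω ≤ w}, h (S ω)) + α * ∫ ω, h (S ω) := by
    intro w
    have hi1 : Integrable ({ω | S ω ≤ w}.indicator (fun _ => h w)) ℙ :=
      (integrable_const (h w)).indicator (hsetm w)
    have hi2 : Integrable ({ω | S ω ≤ w}.indicator (fun ω => h (S ω))) ℙ :=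
      hhint.indicator (hsetm w)
    have hi3 : Integrable (fun ω => α * h (S ω)) ℙ := hhint.const_mul α
    have heq : (fun ω => ((if S ω ≤ w then (1:ℝ) else 0) - α) * (h w - h (S ω)))
        = fun ω => ({ω | S ω ≤ w}.indicator (fun _ => h w) ω
            - {ω | S ω ≤ w}.indicator (fun ω => h (S ω)) ω)
          + (α * h (S ω) - α * h w) := by
      funext ω
      by_cases hc : S ω ≤ w
      · simp only [Set.indicator, mem_setOf_eq, hc, if_pos, if_true]; ring
      · simp only [Set.indicator, mem_setOf_eq, hc, if_neg, if_false]; ring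
    have hi12 : Integrable (fun ω => {ω | S ω ≤ w}.indicator (fun _ => h w) ω
        - {ω | S ω ≤ w}.indicator (fun ω => h (S ω)) ω) ℙ := hi1.sub hi2
    have hi34 : Integrable (fun ω => α * h (S ω) - α * h w) ℙ :=
      hi3.sub (integrable_const _)
    rw [heq, integral_add hi12 hi34, integral_sub hi1 hi2,
      integral_sub hi3 (integrable_const _),
      integral_indicator_const _ (hsetm w), integral_indicator (hsetm w),
      integral_const, measureReal_def, measureReal_def, integral_const_mul, measure_univ, smul_eq_mul, hμt]
    simp only [ENNReal.toReal_one, smul_eq_mul, one_mul]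
    ring
  -- set integral bounds
  have hIub : ∀ (A : Set Ω) (c : ℝ), MeasurableSet A → (∀ ω ∈ A, S ω ≤ c) →
      (∫ ω in A, h (S ω)) ≤ h c * (ℙ A).toReal := by
    intro A c hAm hAc
    have h1 := setIntegral_mono_on hhint.integrableOn
      (integrableOn_const (measure_ne_top _ _)) hAm
      (fun ω hω => (hh.monotone (hAc ω hω) : h (S ω) ≤ h c))
    rwa [setIntegral_const, measureReal_def, smul_eq_mul, mul_comm] at h1
  have hIlb : ∀ (A : Set Ω) (c : ℝ), MeasurableSet A → (∀ ω ∈ A, c ≤ S ω) →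
      h c * (ℙ A).toReal ≤ (∫ ω in A, h (S ω)) := by
    intro A c hAm hAc
    have h1 := setIntegral_mono_on
      (integrableOn_const (measure_ne_top _ _)) hhint.integrableOn hAm
      (fun ω hω => (hh.monotone (hAc ω hω) : h c ≤ h (S ω)))
    rwa [setIntegral_const, measureReal_def, smul_eq_mul, mul_comm] at h1
  have hsub : ∀ a b : ℝ, a ≤ b → {ω | S ω ≤ a} ⊆ {ω | S ω ≤ b} :=
    fun a b hab ω hω => le_trans hω hab
  have hμdiff : ∀ a b : ℝ, a ≤ b →
      (ℙ ({ω | S ω ≤ b} \ {ω | S ω ≤ a})).toReal = F b - F a := by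
    intro a b hab
    rw [measure_diff (hsub a b hab) (hsetm a).nullMeasurableSet (measure_ne_top _ _),
      ENNReal.toReal_sub_of_le (measure_mono (hsub a b hab)) (measure_ne_top _ _), hμt, hμt]
  have hIdiff : ∀ a b : ℝ, a ≤ b →
      (∫ ω in {ω | S ω ≤ b}, h (S ω)) - (∫ ω in {ω | S ω ≤ a}, h (S ω))
        = ∫ ω in {ω | S ω ≤ b} \ {ω | S ω ≤ a}, h (S ω) :=
    fun a b hab => (integral_diff (hsetm a) hhint.integrableOn (hsub a b hab)).symm
  rcases eq_or_ne v u with hvu | hvu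
  · -- v = VaR: second component comparison
    subst hvu
    have hmne : m ≠ ESC := by
      intro hm; exact hmv (by rw [hm])
    rw [Prod.Lex.lt_iff]
    right
    refine ⟨rfl, ?_⟩
    have hTmeas : MeasurableSet {ω | u < S ω} := measurableSet_lt measurable_const Smeas
    have hppos : (0:ℝ) < 1 - α := by linarith [hα.2]
    have hEX : ∀ j, (∫ ω in {ω | u < S ω}, X j ω) = ESC j * (1 - α) := by
      intro j
      rw [hESC j, hμT]
      field_simp
    set A : Fin d → ℝ := fun j =>
      φ' j (m j) * m j - φ j (m j) - (φ' j (ESC j) * ESC j - φ j (ESC j)) with hA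
    set B : Fin d → ℝ := fun j => φ' j (ESC j) - φ' j (m j) with hB
    have hindj : ∀ j, (fun ω => if u < S ω then A j + B j * X j ω else 0)
        = {ω | u < S ω}.indicator (fun ω => A j + B j * X j ω) := by
      intro j; funext ω; by_cases hc : u < S ω <;> simp [Set.indicator, hc]
    have hint_j : ∀ j, Integrable (fun ω => if u < S ω then A j + B j * X j ω else 0) ℙ := by
      intro j
      rw [hindj j]
      exact ((integrable_const (A j)).add ((hXint j).const_mul (B j))).indicator hTmeas
    have hJdiff : (∫ ω, ∑ j, if u < S ω then
          φ' j (m j) * (m j - X j ω) - φ j (m j) + φ j (X j ω) else 0)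
        - (∫ ω, ∑ j, if u < S ω then
          φ' j (ESC j) * (ESC j - X j ω) - φ j (ESC j) + φ j (X j ω) else 0)
        = ∑ j, ∫ ω, (if u < S ω then A j + B j * X j ω else 0) := by
      rw [← integral_sub (hintESC m u) (hintESC ESC u),
        ← integral_finset_sum _ (fun j _ => hint_j j)]
      congr 1; funext ω
      rw [← Finset.sum_sub_distrib]
      refine Finset.sum_congr rfl fun j _ => ?_
      by_cases hc : u < S ω
      · simp only [if_pos hc, hA, hB]; ring
      · simp [if_neg hc]
    have hval : ∀ j, (∫ ω, (if u < S ω then A j + B j * X j ω else 0))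
        = (1 - α) * (φ j (ESC j) - φ j (m j) - φ' j (m j) * (ESC j - m j)) := by
      intro j
      rw [hindj j, integral_indicator hTmeas,
        integral_add (show Integrable (fun _ => A j) ((ℙ : Measure Ω).restrict {ω | u < S ω}) from
            integrableOn_const (C := A j) (measure_ne_top _ _))
          (((hXint j).const_mul (B j)).integrableOn),
        setIntegral_const, measureReal_def, integral_const_mul, hEX j, hμT, smul_eq_mul]
      simp only [hA, hB]
      ring
    have hpos : 0 < ∑ j, ∫ ω, (if u < S ω then A j + B j * X j ω else 0) := by
      obtain ⟨j0, hj0⟩ := Function.ne_iff.mp hmne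
      refine Finset.sum_pos' (fun j _ => ?_) ⟨j0, Finset.mem_univ j0, ?_⟩
      · rw [hval j]
        rcases eq_or_ne (m j) (ESC j) with he | he
        · rw [he]; simp
        · exact le_of_lt (mul_pos hppos (bregman_pos (hconv j) (hderiv j) he))
      · rw [hval j0]
        exact mul_pos hppos (bregman_pos (hconv j0) (hderiv j0) hj0)
    rw [← hJdiff] at hpos
    simp only [ofLex_toLex]
    linarith
  · -- v ≠ VaR: first component comparison
    rw [Prod.Lex.lt_iff]
    left
    show (∫ ω, ((if S ω ≤ u then (1:ℝ) else 0) - α) * (h u - h (S ω)))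
      < (∫ ω, ((if S ω ≤ v then (1:ℝ) else 0) - α) * (h v - h (S ω)))
    rw [hG u, hG v, hFu]
    have hFvne : F v ≠ α := by
      intro hFv
      exact hvu (hmono.injOn (by simp [hFv]; exact ⟨hα.1, hα.2⟩)
        (by simp [hFu]; exact ⟨hα.1, hα.2⟩) (hFv.trans hFu.symm))
    rcases lt_or_gt_of_ne hvu with hlt | hlt
    · -- v < u
      have hFvlt : F v < α := lt_of_le_of_ne (hFu ▸ hFmono hlt.le) hFvne
      have hopen : IsOpen {x | F x < α} := isOpen_lt hcont continuous_const
      obtain ⟨ε, hε, hball⟩ := Metric.isOpen_iff.mp hopen v hFvlt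
      set v' := min (v + ε/2) ((v + u)/2) with hv'def
      have hvv' : v < v' := lt_min (by linarith) (by linarith)
      have hv'u : v' < u := min_lt_of_right_lt (by linarith)
      have hFv' : F v' < α := by
        refine hball ?_
        rw [Metric.mem_ball, Real.dist_eq, abs_lt]
        have := min_le_left (v + ε/2) ((v + u)/2)
        constructor <;> [linarith; linarith [hv'def ▸ this]]
      have h1 : h v' * (α - F v') ≤ (∫ ω in {ω | S ω ≤ u}, h (S ω)) - (∫ ω in {ω | S ω ≤ v'}, h (S ω)) := by
        rw [hIdiff v' u hv'u.le]
        have := hIlb ({ω | S ω ≤ u} \ {ω | S ω ≤ v'}) v'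
          ((hsetm u).diff (hsetm v')) (fun ω hω => (not_le.mp hω.2).le)
        rwa [hμdiff v' u hv'u.le, hFu] at this
      have h2 : h v * (F v' - F v) ≤ (∫ ω in {ω | S ω ≤ v'}, h (S ω)) - (∫ ω in {ω | S ω ≤ v}, h (S ω)) := by
        rw [hIdiff v v' hvv'.le]
        have := hIlb ({ω | S ω ≤ v'} \ {ω | S ω ≤ v}) v
          ((hsetm v').diff (hsetm v)) (fun ω hω => (not_le.mp hω.2).le)
        rwa [hμdiff v v' hvv'.le] at this
      have hhv : h v < h v' := hh hvv'
      nlinarith [mul_pos (sub_pos.mpr hhv) (sub_pos.mpr hFv')]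
    · -- u < v
      have hFvgt : α < F v := lt_of_le_of_ne (hFu ▸ hFmono hlt.le) (Ne.symm hFvne)
      have hopen : IsOpen {x | α < F x} := isOpen_lt continuous_const hcont
      obtain ⟨ε, hε, hball⟩ := Metric.isOpen_iff.mp hopen v hFvgt
      set v' := max (v - ε/2) ((v + u)/2) with hv'def
      have hvv' : v' < v := max_lt (by linarith) (by linarith)
      have huv' : u < v' := lt_max_of_lt_right (by linarith)
      have hFv' : α < F v' := by
        refine hball ?_
        rw [Metric.mem_ball, Real.dist_eq, abs_lt]
        have := le_max_left (v - ε/2) ((v + u)/2)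
        constructor <;> [linarith [hv'def ▸ this]; linarith]
      have h1 : (∫ ω in {ω | S ω ≤ v'}, h (S ω)) - (∫ ω in {ω | S ω ≤ u}, h (S ω)) ≤ h v' * (F v' - α) := by
        rw [hIdiff u v' huv'.le]
        have := hIub ({ω | S ω ≤ v'} \ {ω | S ω ≤ u}) v'
          ((hsetm v').diff (hsetm u)) (fun ω hω => hω.1)
        rwa [hμdiff u v' huv'.le, hFu] at this
      have h2 : (∫ ω in {ω | S ω ≤ v}, h (S ω)) - (∫ ω in {ω | S ω ≤ v'}, h (S ω)) ≤ h v * (F v - F v') := by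
        rw [hIdiff v' v hvv'.le]
        have := hIub ({ω | S ω ≤ v} \ {ω | S ω ≤ v'}) v
          ((hsetm v).diff (hsetm v')) (fun ω hω => hω.1)
        rwa [hμdiff v' v hvv'.le] at this
      have hhv : h v' < h v := hh hvv'
      nlinarith [mul_pos (sub_pos.mpr hhv) (sub_pos.mpr hFv')]
end

section
/- Lexicographic ordering of expected scores under ordered VaR misspecification: Let S be integrable with continuous strictly increasing CDF and h strictly increasing with E|h(S)| < ∞. If v* < v ≤ VaR_α(S) or VaR_α(S) ≤ v < v*, then E[(1{S≤v}-α)(h(v)-h(S))] < E[(1{S≤v*}-α)(h(v*)-h(S))]; consequently for any m, m* ∈ ℝ, E[S_j((m,v),X)] ≤_lex E[S_j((m*,v*),X)] for the multi-objective ESC score S_j. -/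
open MeasureTheory ProbabilityTheory Set

variable {Ω : Type*} [MeasureSpace Ω]

section Aux

variable [IsProbabilityMeasure (ℙ : Measure Ω)]

private lemma intVaRscore (S : Ω → ℝ) (hSm : Measurable S) (α u : ℝ) (h : ℝ → ℝ)
    (hhint : Integrable (fun ω => h (S ω)) ℙ) :
    Integrable (fun ω => ((if S ω ≤ u then (1:ℝ) else 0) - α) * (h u - h (S ω))) ℙ := by
  apply Integrable.bdd_mul (c := 1 + |α|) ((integrable_const (h u)).sub hhint)
  · exact ((Measurable.ite (hSm measurableSet_Iic) measurable_const
      measurable_const).sub measurable_const).aestronglyMeasurable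
  · refine Filter.Eventually.of_forall (fun x => ?_)
    rw [Real.norm_eq_abs]
    calc |(if S x ≤ u then (1:ℝ) else 0) - α| ≤ |if S x ≤ u then (1:ℝ) else 0| + |α| :=
          abs_sub _ _
      _ ≤ 1 + |α| := by split_ifs <;> simp

private lemma meas_split (S : Ω → ℝ) (hSm : Measurable S) (a b : ℝ) (hab : a ≤ b) :
    (ℙ {ω | a < S ω ∧ S ω ≤ b}).toReal
      = (ℙ {ω | S ω ≤ b}).toReal - (ℙ {ω | S ω ≤ a}).toReal := by
  have hset : {ω | a < S ω ∧ S ω ≤ b} = {ω | S ω ≤ b} \ {ω | S ω ≤ a} := by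
    ext ω; simp only [Set.mem_setOf_eq, Set.mem_diff, not_le]; tauto
  have hsub : {ω : Ω | S ω ≤ a} ⊆ {ω | S ω ≤ b} := fun ω hω => le_trans hω hab
  rw [hset, measure_diff hsub ((hSm measurableSet_Iic).nullMeasurableSet) (measure_ne_top _ _),
    ENNReal.toReal_sub_of_le (measure_mono hsub) (measure_ne_top _ _)]

private lemma key_identity (S : Ω → ℝ) (hSm : Measurable S) (α : ℝ) (h : ℝ → ℝ)
    (hhint : Integrable (fun ω => h (S ω)) ℙ) (a b : ℝ) (hab : a ≤ b) :
    (∫ ω, ((if S ω ≤ b then (1:ℝ) else 0) - α) * (h b - h (S ω)))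
      = (∫ ω, ((if S ω ≤ a then (1:ℝ) else 0) - α) * (h a - h (S ω)))
      + ((ℙ {ω | S ω ≤ a}).toReal - α) * (h b - h a)
      + ∫ ω, ({ω | a < S ω ∧ S ω ≤ b}).indicator (fun ω => h b - h (S ω)) ω := by
  have meas_ab : MeasurableSet {ω | a < S ω ∧ S ω ≤ b} := hSm measurableSet_Ioc
  have meas_a : MeasurableSet {ω : Ω | S ω ≤ a} := hSm measurableSet_Iic
  have int1 := intVaRscore S hSm α b h hhint
  have int2 := intVaRscore S hSm α a h hhint
  have int3 : Integrable (fun ω => ({ω | a < S ω ∧ S ω ≤ b}).indicator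
      (fun ω => h b - h (S ω)) ω) ℙ := by
    exact (((integrable_const (h b)).sub hhint).indicator meas_ab)
  have int4 : Integrable (fun ω => ({ω : Ω | S ω ≤ a}).indicator
      (fun _ => h b - h a) ω) ℙ := by
    simpa using ((integrable_const (h b - h a)).indicator meas_a)
  have hpt : ∀ ω, ((if S ω ≤ b then (1:ℝ) else 0) - α) * (h b - h (S ω))
      = ((if S ω ≤ a then (1:ℝ) else 0) - α) * (h a - h (S ω))
        + (({ω : Ω | S ω ≤ a}).indicator (fun _ => h b - h a) ω
          + (({ω | a < S ω ∧ S ω ≤ b}).indicator (fun ω => h b - h (S ω)) ω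
            - α * (h b - h a))) := by
    intro ω
    simp only [Set.indicator_apply, Set.mem_setOf_eq]
    rcases le_or_gt (S ω) a with h1 | h1
    · have h2 : S ω ≤ b := h1.trans hab
      have h3 : ¬ (a < S ω ∧ S ω ≤ b) := fun hc => absurd h1 (not_le.2 hc.1)
      simp only [if_pos h1, if_pos h2, if_neg h3]
      ring
    · rcases le_or_gt (S ω) b with h2 | h2
      · have h3 : a < S ω ∧ S ω ≤ b := ⟨h1, h2⟩
        simp only [if_pos h2, if_neg (not_le.2 h1), if_pos h3]
        ring
      · have h3 : ¬ (a < S ω ∧ S ω ≤ b) := fun hc => absurd h2 (not_lt.2 hc.2)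
        simp only [if_neg (not_le.2 h1), if_neg (not_le.2 h2), if_neg h3]
        ring
  calc (∫ ω, ((if S ω ≤ b then (1:ℝ) else 0) - α) * (h b - h (S ω)))
      = ∫ ω, (((if S ω ≤ a then (1:ℝ) else 0) - α) * (h a - h (S ω))
        + (({ω : Ω | S ω ≤ a}).indicator (fun _ => h b - h a) ω
          + (({ω | a < S ω ∧ S ω ≤ b}).indicator (fun ω => h b - h (S ω)) ω
            - α * (h b - h a)))) := by
        exact integral_congr_ae (Filter.Eventually.of_forall hpt)
    _ = (∫ ω, ((if S ω ≤ a then (1:ℝ) else 0) - α) * (h a - h (S ω)))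
        + ((∫ ω, ({ω : Ω | S ω ≤ a}).indicator (fun _ => h b - h a) ω)
          + ((∫ ω, ({ω | a < S ω ∧ S ω ≤ b}).indicator (fun ω => h b - h (S ω)) ω)
            - ∫ _ω : Ω, α * (h b - h a) ∂ℙ)) := by
        have int5 : Integrable (fun ω => ({ω | a < S ω ∧ S ω ≤ b}).indicator
            (fun ω => h b - h (S ω)) ω - α * (h b - h a)) ℙ :=
          int3.sub (integrable_const (α * (h b - h a)))
        have int6 : Integrable (fun ω => ({ω : Ω | S ω ≤ a}).indicator (fun _ => h b - h a) ω
            + (({ω | a < S ω ∧ S ω ≤ b}).indicator (fun ω => h b - h (S ω)) ω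
              - α * (h b - h a))) ℙ := int4.add int5
        rw [integral_add int2 int6, integral_add int4 int5,
          integral_sub int3 (integrable_const (α * (h b - h a)))]
    _ = _ := by
        rw [integral_indicator_const (h b - h a) meas_a, integral_const]
        simp only [measure_univ, ENNReal.toReal_one, smul_eq_mul, one_smul, measureReal_def]
        ring

end Aux

/-- Lexicographic ordering of expected multi-objective ESC scores under ordered
misspecification of the total VaR. -/
theorem stmt16 [IsProbabilityMeasure (ℙ : Measure Ω)]
    (d : ℕ) (X : Fin d → Ω → ℝ)
    (hXmeas : ∀ i, Measurable (X i)) (hXint : ∀ i, Integrable (X i) ℙ)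
    (S : Ω → ℝ) (hS : ∀ ω, S ω = ∑ i, X i ω)
    (F : ℝ → ℝ) (hF : ∀ x, F x = (ℙ {ω | S ω ≤ x}).toReal)
    (hcont : Continuous F)
    (hmono : StrictMonoOn F {x | F x ∈ Ioo 0 1})
    (α : ℝ) (hα : α ∈ Ioo (0:ℝ) 1)
    (h : ℝ → ℝ) (hh : StrictMono h)
    (hhint : Integrable (fun ω => h (S ω)) ℙ)
    (j : Fin d) (φ φ' : ℝ → ℝ)
    (hconv : StrictConvexOn ℝ Set.univ φ)
    (hderiv : ∀ y, HasDerivAt φ (φ' y) y)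
    (hintESC : ∀ m v : ℝ, Integrable
      (fun ω => if v < S ω then φ' m * (m - X j ω) - φ m + φ (X j ω) else 0) ℙ)
    (v vstar : ℝ)
    (hcase : (vstar < v ∧ v ≤ VaR α S) ∨ (VaR α S ≤ v ∧ v < vstar)) :
    (∫ ω, ((if S ω ≤ v then (1:ℝ) else 0) - α) * (h v - h (S ω)))
      < (∫ ω, ((if S ω ≤ vstar then (1:ℝ) else 0) - α) * (h vstar - h (S ω)))
    ∧ ∀ m mstar : ℝ,
      (toLex (
          (∫ ω, ((if S ω ≤ v then (1:ℝ) else 0) - α) * (h v - h (S ω))),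
          (∫ ω, if v < S ω then φ' m * (m - X j ω) - φ m + φ (X j ω) else 0)) : ℝ ×ₗ ℝ)
        ≤ toLex (
          (∫ ω, ((if S ω ≤ vstar then (1:ℝ) else 0) - α) * (h vstar - h (S ω))),
          (∫ ω, if vstar < S ω then
            φ' mstar * (mstar - X j ω) - φ mstar + φ (X j ω) else 0)) := by
  have hSm : Measurable S := by
    have hfun : S = fun ω => ∑ i, X i ω := funext hS
    rw [hfun]; exact Finset.measurable_sum _ (fun i _ => hXmeas i)
  -- F is monotone
  have hFmono : Monotone F := by
    intro x y hxy
    rw [hF, hF]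
    exact ENNReal.toReal_mono (measure_ne_top _ _)
      (measure_mono (fun ω hω => le_trans hω hxy))
  -- The defining set of VaR
  set A : Set ℝ := {x | α ≤ F x} with hA
  have hVaR : VaR α S = sInf A := by
    unfold VaR
    congr 1
    ext x
    rw [hA, Set.mem_setOf_eq, Set.mem_setOf_eq, hF]
  have hAclosed : IsClosed A := IsClosed.preimage hcont isClosed_Ici
  -- A nonempty
  have hAne : A.Nonempty := by
    have hmon : Monotone (fun n : ℕ => {ω | S ω ≤ (n:ℝ)}) := by
      intro m n hmn ω hω
      simp only [Set.mem_setOf_eq] at hω ⊢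
      exact le_trans hω (by exact_mod_cast hmn)
    have htend := tendsto_measure_iUnion_atTop (μ := (ℙ : Measure Ω)) hmon
    have huniv : (⋃ n : ℕ, {ω | S ω ≤ (n:ℝ)}) = Set.univ := by
      ext ω
      simp only [Set.mem_iUnion, Set.mem_setOf_eq, Set.mem_univ, iff_true]
      exact exists_nat_ge (S ω)
    simp only [huniv, measure_univ] at htend
    have htoReal : Filter.Tendsto (fun n : ℕ => F n) Filter.atTop (nhds 1) := by
      have := (ENNReal.tendsto_toReal (a := 1) (by simp)).comp htend
      simpa [Function.comp_def, hF] using this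
    obtain ⟨n, hn⟩ := (htoReal.eventually (eventually_ge_nhds hα.2)).exists
    exact ⟨n, hn⟩
  -- A bounded below
  have hAbdd : BddBelow A := by
    have hant : Antitone (fun n : ℕ => {ω | S ω ≤ -(n:ℝ)}) := by
      intro m n hmn ω hω
      simp only [Set.mem_setOf_eq] at hω ⊢
      refine le_trans hω (neg_le_neg ?_)
      exact_mod_cast hmn
    have htend := tendsto_measure_iInter_atTop (μ := (ℙ : Measure Ω))
      (s := fun n : ℕ => {ω | S ω ≤ -(n:ℝ)})
      (fun n : ℕ => ((hSm measurableSet_Iic).nullMeasurableSet :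
        NullMeasurableSet {ω | S ω ≤ -(n:ℝ)} ℙ))
      hant ⟨0, measure_ne_top _ _⟩
    have hempty : (⋂ n : ℕ, {ω | S ω ≤ -(n:ℝ)}) = (∅ : Set Ω) := by
      ext ω
      simp only [Set.mem_iInter, Set.mem_setOf_eq, Set.mem_empty_iff_false, iff_false, not_forall,
        not_le]
      obtain ⟨n, hn⟩ := exists_nat_gt (-(S ω))
      exact ⟨n, by linarith⟩
    simp only [hempty, measure_empty] at htend
    have htoReal : Filter.Tendsto (fun n : ℕ => F (-(n:ℝ))) Filter.atTop (nhds 0) := by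
      have := (ENNReal.tendsto_toReal (a := 0) (by simp)).comp htend
      simpa [Function.comp_def, hF] using this
    obtain ⟨n, hn⟩ := (htoReal.eventually (eventually_lt_nhds hα.1)).exists
    refine ⟨-(n:ℝ), fun x hx => ?_⟩
    by_contra hc
    push_neg at hc
    exact absurd (lt_of_le_of_lt (le_trans hx (hFmono hc.le)) hn) (lt_irrefl α)
  have hVaRmem : α ≤ F (VaR α S) := by
    rw [hVaR]; exact hAclosed.csInf_mem hAne hAbdd
  -- x < VaR → F x < α
  have hlt : ∀ x, x < VaR α S → F x < α := by
    intro x hx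
    by_contra hc
    push_neg at hc
    exact absurd (hVaR ▸ csInf_le hAbdd hc) (not_le.2 hx)
  -- x ≤ VaR → F x ≤ α
  have hle : ∀ x, x ≤ VaR α S → F x ≤ α := by
    intro x hx
    rcases lt_or_eq_of_le hx with hx' | hx'
    · exact (hlt x hx').le
    · subst hx'
      by_contra hc
      push_neg at hc
      have hev : ∀ᶠ y in nhds (VaR α S), α < F y :=
        Filter.Tendsto.eventually_const_lt hc (hcont.tendsto (VaR α S))
      obtain ⟨ε, hε, hball⟩ := Metric.eventually_nhds_iff.mp hev
      have hmem : α ≤ F (VaR α S - ε/2) :=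
        (hball (by rw [Real.dist_eq, abs_of_nonpos (by linarith)]; linarith)).le
      have hmem' : VaR α S - ε/2 ∈ A := hmem
      have hfin : sInf A ≤ VaR α S - ε/2 := csInf_le hAbdd hmem'
      rw [← hVaR] at hfin
      linarith
  -- integral of indicator over null set is zero
  have hIzero : ∀ (a b : ℝ), ℙ {ω | a < S ω ∧ S ω ≤ b} = 0 →
      (∫ ω, ({ω | a < S ω ∧ S ω ≤ b}).indicator (fun ω => h b - h (S ω)) ω) = 0 := by
    intro a b h0
    refine integral_eq_zero_of_ae ?_
    filter_upwards [measure_eq_zero_iff_ae_notMem.mp h0] with ω hω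
    simpa using Set.indicator_of_notMem (s := {ω | a < S ω ∧ S ω ≤ b}) hω
      (fun ω => h b - h (S ω))
  -- main strict inequality
  have hmain : (∫ ω, ((if S ω ≤ v then (1:ℝ) else 0) - α) * (h v - h (S ω)))
      < (∫ ω, ((if S ω ≤ vstar then (1:ℝ) else 0) - α) * (h vstar - h (S ω))) := by
    rcases hcase with ⟨h1, h2⟩ | ⟨h1, h2⟩
    · -- vstar < v ≤ VaR
      have hkey := key_identity S hSm α h hhint vstar v h1.le
      rw [← hF vstar] at hkey
      have hΔ : 0 < h v - h vstar := sub_pos.2 (hh h1)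
      have hFvstar : F vstar < α := hlt vstar (lt_of_lt_of_le h1 h2)
      have hFv : F v ≤ α := hle v h2
      set I := ∫ ω, ({ω | vstar < S ω ∧ S ω ≤ v}).indicator (fun ω => h v - h (S ω)) ω with hI
      have hIbound : I < (h v - h vstar) * (F v - F vstar) ∨ I = 0 := by
        rcases eq_or_lt_of_le (zero_le : 0 ≤ ℙ {ω | vstar < S ω ∧ S ω ≤ v}) with h0 | h0
        · exact Or.inr (hIzero vstar v h0.symm)
        · left
          have meas_ab : MeasurableSet {ω | vstar < S ω ∧ S ω ≤ v} := hSm measurableSet_Ioc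
          have intI : Integrable (fun ω => ({ω | vstar < S ω ∧ S ω ≤ v}).indicator
              (fun ω => h v - h (S ω)) ω) ℙ := by
            exact (((integrable_const (h v)).sub hhint).indicator meas_ab)
          have intC : Integrable (fun ω => ({ω | vstar < S ω ∧ S ω ≤ v}).indicator
              (fun _ => h v - h vstar) ω) ℙ := by
            simpa using ((integrable_const (h v - h vstar)).indicator meas_ab)
          have hdiff : (∫ ω, (({ω | vstar < S ω ∧ S ω ≤ v}).indicator
              (fun _ => h v - h vstar) ω - ({ω | vstar < S ω ∧ S ω ≤ v}).indicator
                (fun ω => h v - h (S ω)) ω)) > 0 := by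
            rw [gt_iff_lt]
            rw [integral_pos_iff_support_of_nonneg]
            · refine lt_of_lt_of_le h0 (measure_mono ?_)
              intro ω hω
              simp only [Function.mem_support, Set.indicator_of_mem hω]
              have := hh hω.1
              intro hc
              have : h (S ω) = h vstar := by linarith
              linarith [hh hω.1]
            · intro ω
              by_cases hω : ω ∈ {ω | vstar < S ω ∧ S ω ≤ v}
              · simp only [Set.indicator_of_mem hω, Pi.zero_apply]
                have := hh hω.1
                linarith
              · simp [Set.indicator_of_notMem hω]
            · exact intC.sub intI
          rw [integral_sub intC intI] at hdiff
          have hCval : (∫ ω, ({ω | vstar < S ω ∧ S ω ≤ v}).indicator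
              (fun _ => h v - h vstar) ω) = (h v - h vstar) * (F v - F vstar) := by
            rw [integral_indicator_const _ meas_ab, smul_eq_mul, measureReal_def,
              meas_split S hSm vstar v h1.le, ← hF, ← hF]
            ring
          rw [hCval] at hdiff
          linarith
      rcases hIbound with hb | hb
      · nlinarith
      · rw [hb] at hkey
        nlinarith
    · -- VaR ≤ v < vstar
      have hkey := key_identity S hSm α h hhint v vstar h2.le
      rw [← hF v] at hkey
      have hΔ : 0 < h vstar - h v := sub_pos.2 (hh h2)
      have hFv : α ≤ F v := le_trans hVaRmem (hFmono h1)
      set I := ∫ ω, ({ω | v < S ω ∧ S ω ≤ vstar}).indicator (fun ω => h vstar - h (S ω)) ω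
        with hI
      have meas_ab : MeasurableSet {ω | v < S ω ∧ S ω ≤ vstar} := hSm measurableSet_Ioc
      have hInonneg : 0 ≤ I := by
        refine integral_nonneg fun ω => ?_
        by_cases hω : ω ∈ {ω | v < S ω ∧ S ω ≤ vstar}
        · simp only [Set.indicator_of_mem hω, Pi.zero_apply]
          rcases eq_or_lt_of_le hω.2 with hq | hq
          · simp [hq]
          · linarith [hh hq]
        · simp [Set.indicator_of_notMem hω]
      rcases eq_or_lt_of_le hFv with hFveq | hFvlt
      · -- F v = α, need I > 0
        set y := (v + vstar) / 2 with hy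
        have hvy : v < y := by rw [hy]; linarith
        have hyvs : y < vstar := by rw [hy]; linarith
        have hpos : 0 < ℙ {ω | v < S ω ∧ S ω ≤ y} := by
          rcases eq_or_lt_of_le (zero_le : 0 ≤ ℙ {ω | v < S ω ∧ S ω ≤ y}) with h0 | h0
          · exfalso
            have hFy : F y = F v := by
              have := meas_split S hSm v y hvy.le
              rw [← h0] at this
              rw [← hF, ← hF] at this
              simp at this
              linarith
            have hvmem : v ∈ {x | F x ∈ Ioo 0 1} := by
              simp only [Set.mem_setOf_eq, Set.mem_Ioo]
              exact ⟨by linarith [hα.1], by linarith [hα.2]⟩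
            have hymem : y ∈ {x | F x ∈ Ioo 0 1} := by
              simp only [Set.mem_setOf_eq, Set.mem_Ioo, hFy]
              exact ⟨by linarith [hα.1], by linarith [hα.2]⟩
            exact absurd (hmono hvmem hymem hvy) (by rw [hFy]; exact lt_irrefl _)
          · exact h0
        have hIpos : 0 < I := by
          have meas_y : MeasurableSet {ω | v < S ω ∧ S ω ≤ y} := hSm measurableSet_Ioc
          have intIy : Integrable (fun ω => ({ω | v < S ω ∧ S ω ≤ y}).indicator
              (fun ω => h vstar - h (S ω)) ω) ℙ := by
            exact (((integrable_const (h vstar)).sub hhint).indicator meas_y)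
          have intI : Integrable (fun ω => ({ω | v < S ω ∧ S ω ≤ vstar}).indicator
              (fun ω => h vstar - h (S ω)) ω) ℙ := by
            exact (((integrable_const (h vstar)).sub hhint).indicator meas_ab)
          have hsmallpos : 0 < ∫ ω, ({ω | v < S ω ∧ S ω ≤ y}).indicator
              (fun ω => h vstar - h (S ω)) ω := by
            rw [integral_pos_iff_support_of_nonneg]
            · refine lt_of_lt_of_le hpos (measure_mono ?_)
              intro ω hω
              simp only [Function.mem_support, Set.indicator_of_mem hω]
              have := hh (lt_of_le_of_lt hω.2 hyvs)
              intro hc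
              linarith
            · intro ω
              by_cases hω : ω ∈ {ω | v < S ω ∧ S ω ≤ y}
              · simp only [Set.indicator_of_mem hω, Pi.zero_apply]
                linarith [hh (lt_of_le_of_lt hω.2 hyvs)]
              · simp [Set.indicator_of_notMem hω]
            · exact intIy
          refine lt_of_lt_of_le hsmallpos (integral_mono intIy intI fun ω => ?_)
          by_cases hω : ω ∈ {ω | v < S ω ∧ S ω ≤ y}
          · have hω' : ω ∈ {ω | v < S ω ∧ S ω ≤ vstar} := ⟨hω.1, le_trans hω.2 hyvs.le⟩
            rw [Set.indicator_of_mem hω, Set.indicator_of_mem hω']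
          · rw [Set.indicator_of_notMem hω]
            by_cases hω' : ω ∈ {ω | v < S ω ∧ S ω ≤ vstar}
            · rw [Set.indicator_of_mem hω']
              rcases eq_or_lt_of_le hω'.2 with hq | hq
              · simp [hq]
              · linarith [hh hq]
            · rw [Set.indicator_of_notMem hω']
        nlinarith
      · nlinarith
  refine ⟨hmain, fun m mstar => Prod.Lex.le_iff.mpr (Or.inl hmain)⟩
end

section
/- Elliptical allocation formula for the multivariate normal case: If X ~ N(μ, Σ) in ℝ^d with Σ positive definite, S = 𝟙ᵀX, and α ∈ (0,1), then ESC_α(X_j, S) = E[X_j | S ≥ VaR_α(S)] = μ_j + ((Σ𝟙)_j / (𝟙ᵀΣ𝟙)) · (ES_α(S) - 𝟙ᵀμ). -/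
open MeasureTheory ProbabilityTheory Set Matrix

variable {Ω : Type*} [MeasureSpace Ω]

section AuxLemmas

open Real Filter
open scoped NNReal ENNReal Topology

lemma integrable_id_gaussianReal (m : ℝ) (v : ℝ≥0) :
    Integrable (id : ℝ → ℝ) (gaussianReal m v) := by
  by_cases hv : v = 0
  · rw [hv, gaussianReal_zero_var]
    refine ⟨aestronglyMeasurable_id, ?_⟩
    rw [HasFiniteIntegral, lintegral_dirac]
    exact ENNReal.coe_lt_top
  · rw [gaussianReal_of_var_ne_zero m hv]
    rw [integrable_withDensity_iff (measurable_gaussianPDF m v)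
      (Filter.Eventually.of_forall fun x => ENNReal.ofReal_lt_top)]
    have hvpos : (0:ℝ) < (v:ℝ) := by positivity
    have hb : (0:ℝ) < 1/(2*(v:ℝ)) := by positivity
    have h1 : Integrable (fun y : ℝ => (y + m) * Real.exp (-(1/(2*(v:ℝ))) * y^2)) := by
      have h2 := integrable_rpow_mul_exp_neg_mul_sq hb (by norm_num : (-1:ℝ) < 1)
      simp only [Real.rpow_one] at h2
      have h3 := (integrable_exp_neg_mul_sq hb).const_mul m
      have := h2.add h3
      apply Integrable.congr this
      filter_upwards with y
      simp only [Pi.add_apply]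
      ring
    have h4 := h1.comp_sub_right m
    have h5 := h4.const_mul ((Real.sqrt (2 * π * (v:ℝ)))⁻¹)
    apply Integrable.congr h5
    filter_upwards with x
    simp only [gaussianPDF, id]
    rw [ENNReal.toReal_ofReal (gaussianPDFReal_nonneg m v x)]
    simp only [gaussianPDFReal]
    rw [show -(x-m)^2/(2*(v:ℝ)) = -(1/(2*(v:ℝ))) * (x-m)^2 by ring]
    ring

lemma gaussianReal_eq_map (m : ℝ) (v : ℝ≥0) :
    gaussianReal m v
      = Measure.map (fun x => m + Real.sqrt v * x) (gaussianReal 0 1) := by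
  have h1 : (fun x : ℝ => m + Real.sqrt v * x)
      = (fun x => m + x) ∘ (fun x => (Real.sqrt v) * x) := rfl
  rw [h1, ← Measure.map_map (by fun_prop) (by fun_prop)]
  rw [gaussianReal_map_const_mul (Real.sqrt v)]
  have h2 : (NNReal.mk ((Real.sqrt v)^2) (sq_nonneg _) : ℝ≥0) * 1 = v := by
    ext
    simp [Real.sq_sqrt (v.coe_nonneg)]
  rw [h2, gaussianReal_map_const_add]
  norm_num

lemma gaussianReal_singleton (m : ℝ) {v : ℝ≥0} (hv : v ≠ 0) (c : ℝ) :
    gaussianReal m v {c} = 0 :=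
  gaussianReal_absolutelyContinuous m hv (by simp : (volume : Measure ℝ) {c} = 0)

lemma gaussianReal_Ici_pos (m : ℝ) {v : ℝ≥0} (hv : v ≠ 0) (c : ℝ) :
    0 < gaussianReal m v (Ici c) := by
  rw [pos_iff_ne_zero]
  intro h
  rw [gaussianReal_apply m hv, setLIntegral_eq_zero_iff measurableSet_Ici
    (measurable_gaussianPDF m v)] at h
  have h2 : ∀ᵐ x : ℝ, x ∉ Ici c :=
    h.mono fun x hx hmem => (gaussianPDF_pos m hv x).ne' (hx hmem)
  have h3 := ae_iff.mp h2
  simp only [not_not] at h3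
  rw [Set.setOf_mem_eq, Real.volume_Ici] at h3
  simp at h3

lemma integrable_of_map_gaussian [IsProbabilityMeasure (ℙ : Measure Ω)]
    {W : Ω → ℝ} (hW : Measurable W) {m : ℝ} {v : ℝ≥0}
    (h : Measure.map W ℙ = gaussianReal m v) : Integrable W ℙ := by
  have h1 := integrable_id_gaussianReal m v
  rw [← h, integrable_map_measure aestronglyMeasurable_id hW.aemeasurable] at h1
  exact h1

lemma key_identity_s17 [IsProbabilityMeasure (ℙ : Measure Ω)]
    (Z S : Ω → ℝ) (hZm : Measurable Z) (hSm : Measurable S)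
    (mZ mS vZ vS : ℝ) (hvZ : 0 ≤ vZ) (hvS : 0 < vS)
    (hlaw : ∀ a b : ℝ, Measure.map (fun ω => a * Z ω + b * S ω) ℙ
      = gaussianReal (a * mZ + b * mS) (Real.toNNReal (a^2 * vZ + b^2 * vS)))
    (h : ℝ → ℝ) (hhc : Continuous h) (hh0 : ∀ s, |h s| ≤ 1) :
    ∫ ω, h (S ω) * Z ω ∂ℙ = mZ * ∫ ω, h (S ω) ∂ℙ := by
  set γ : Measure ℝ := gaussianReal 0 1 with hγ
  have hγprob : IsProbabilityMeasure γ := by infer_instance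
  -- antiderivative
  set g : ℝ → ℝ := fun s => ∫ x in (0:ℝ)..s, h x with hgdef
  have hg : ∀ s, HasDerivAt g (h s) s := fun s => (hhc.integral_hasStrictDerivAt 0 s).hasDerivAt
  have hgcont : Continuous g := by
    rw [continuous_iff_continuousAt]; exact fun s => (hg s).continuousAt
  have hgbound : ∀ s, |g s| ≤ |s| := by
    intro s
    have := intervalIntegral.norm_integral_le_of_norm_le_const
      (C := 1) (f := h) (a := 0) (b := s) (fun x _ => hh0 x)
    simpa using this
  -- integrability of Z and S
  have hZint : Integrable Z ℙ := by
    have h1 := hlaw 1 0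
    simp only [one_mul, zero_mul, add_zero, one_pow] at h1
    norm_num at h1
    exact integrable_of_map_gaussian hZm h1
  have hSint : Integrable S ℙ := by
    have h1 := hlaw 0 1
    simp only [one_mul, zero_mul, zero_add, one_pow] at h1
    norm_num at h1
    exact integrable_of_map_gaussian hSm h1
  have hSlaw : Measure.map S ℙ = gaussianReal mS (Real.toNNReal vS) := by
    have h1 := hlaw 0 1
    simp only [one_mul, zero_mul, zero_add, one_pow] at h1
    norm_num at h1
    exact h1
  set σ : ℝ → ℝ := fun ε => Real.sqrt (ε^2 * vZ + vS) with hσdef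
  have hσpos : ∀ ε, Real.sqrt vS ≤ σ ε := by
    intro ε
    apply Real.sqrt_le_sqrt
    nlinarith [sq_nonneg ε]
  have hsqrtpos : 0 < Real.sqrt vS := Real.sqrt_pos.2 hvS
  have hσne : ∀ ε, ε^2 * vZ + vS ≠ 0 := by intro ε; nlinarith [sq_nonneg ε]
  -- part (i)
  have hd1 : HasDerivAt (fun ε => ∫ ω, g (S ω + ε * Z ω) ∂ℙ)
      (∫ ω, h (S ω + 0 * Z ω) * Z ω ∂ℙ) 0 := by
    refine (hasDerivAt_integral_of_dominated_loc_of_deriv_le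
      (F := fun ε ω => g (S ω + ε * Z ω)) (F' := fun ε ω => h (S ω + ε * Z ω) * Z ω)
      (x₀ := 0) (bound := fun ω => |Z ω|) (Metric.ball_mem_nhds 0 one_pos) ?_ ?_ ?_ ?_ hZint.abs ?_).2
    · exact Filter.Eventually.of_forall fun ε =>
        ((hgcont.measurable.comp (hSm.add (hZm.const_mul ε))).aestronglyMeasurable :
          AEStronglyMeasurable (fun ω => g (S ω + ε * Z ω)) ℙ)
    · apply Integrable.mono (hSint.add (hZint.const_mul 0))
        ((hgcont.measurable.comp (hSm.add (hZm.const_mul 0))).aestronglyMeasurable :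
          AEStronglyMeasurable (fun ω => g (S ω + 0 * Z ω)) ℙ)
      filter_upwards with ω
      simpa using hgbound (S ω + 0 * Z ω)
    · exact ((hhc.measurable.comp (hSm.add (hZm.const_mul 0))).mul hZm).aestronglyMeasurable
    · filter_upwards with ω ε _
      rw [Real.norm_eq_abs, abs_mul]
      calc |h (S ω + ε * Z ω)| * |Z ω| ≤ 1 * |Z ω| :=
            mul_le_mul_of_nonneg_right (hh0 _) (abs_nonneg _)
        _ = |Z ω| := one_mul _
    · filter_upwards with ω ε _
      have base : HasDerivAt (fun ε : ℝ => S ω + ε * Z ω) (Z ω) ε := by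
        simpa using (hasDerivAt_mul_const (Z ω)).const_add (S ω)
      exact (hg (S ω + ε * Z ω)).comp ε base
  -- part (ii): explicit formula
  have hFeq : ∀ ε : ℝ, ∫ ω, g (S ω + ε * Z ω) ∂ℙ
      = ∫ x, g (mS + ε * mZ + σ ε * x) ∂γ := by
    intro ε
    have hmap : Measure.map (fun ω => S ω + ε * Z ω) ℙ
        = gaussianReal (mS + ε * mZ) (Real.toNNReal (ε^2 * vZ + vS)) := by
      have h1 := hlaw ε 1
      have he : (fun ω => ε * Z ω + 1 * S ω) = (fun ω => S ω + ε * Z ω) := by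
        funext ω; ring
      rw [he] at h1
      rw [h1]
      congr 1
      · ring
      · norm_num
    have hcoe : Real.sqrt ((Real.toNNReal (ε^2 * vZ + vS) : ℝ≥0) : ℝ) = σ ε := by
      rw [Real.coe_toNNReal _ (by nlinarith [sq_nonneg ε])]
    calc ∫ ω, g (S ω + ε * Z ω) ∂ℙ
        = ∫ x, g x ∂(Measure.map (fun ω => S ω + ε * Z ω) ℙ) :=
          (integral_map (by fun_prop) hgcont.aestronglyMeasurable).symm
      _ = ∫ x, g x ∂(Measure.map (fun x => (mS + ε * mZ) + σ ε * x) γ) := by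
          rw [hmap, gaussianReal_eq_map, hcoe]
      _ = ∫ x, g (mS + ε * mZ + σ ε * x) ∂γ :=
          integral_map (by fun_prop) hgcont.aestronglyMeasurable
  -- part (iii)
  have habs : Integrable (fun x : ℝ => |x|) γ := (integrable_id_gaussianReal 0 1).abs
  have hσderiv : ∀ ε, HasDerivAt σ (ε * vZ / σ ε) ε := by
    intro ε
    have h1 : HasDerivAt (fun ε : ℝ => ε^2 * vZ + vS) (2 * ε * vZ) ε := by
      simpa [mul_comm, mul_assoc] using ((hasDerivAt_pow 2 ε).mul_const vZ).add_const vS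
    have h2 := (Real.hasDerivAt_sqrt (hσne ε)).comp ε h1
    refine h2.congr_deriv ?_
    have hne : σ ε ≠ 0 := by positivity
    show 1 / (2 * σ ε) * (2 * ε * vZ) = ε * vZ / σ ε
    field_simp
  have hd2 : HasDerivAt (fun ε => ∫ x, g (mS + ε * mZ + σ ε * x) ∂γ)
      (∫ x, h (mS + 0 * mZ + σ 0 * x) * (mZ + (0 * vZ / σ 0) * x) ∂γ) 0 := by
    refine (hasDerivAt_integral_of_dominated_loc_of_deriv_le
      (F := fun ε x => g (mS + ε * mZ + σ ε * x))
      (F' := fun ε x => h (mS + ε * mZ + σ ε * x) * (mZ + (ε * vZ / σ ε) * x))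
      (x₀ := 0) (bound := fun x => |mZ| + (vZ / Real.sqrt vS) * |x|)
      (Metric.ball_mem_nhds 0 one_pos) ?_ ?_ ?_ ?_ ((integrable_const |mZ|).add (habs.const_mul _)) ?_).2
    · exact Filter.Eventually.of_forall fun ε =>
        ((hgcont.measurable.comp (by fun_prop)).aestronglyMeasurable :
          AEStronglyMeasurable (fun x => g (mS + ε * mZ + σ ε * x)) γ)
    · apply Integrable.mono ((integrable_const |mS + 0 * mZ|).add (habs.const_mul (σ 0)))
        ((hgcont.measurable.comp (by fun_prop)).aestronglyMeasurable :
          AEStronglyMeasurable (fun x => g (mS + 0 * mZ + σ 0 * x)) γ)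
      filter_upwards with x
      rw [Real.norm_eq_abs, Real.norm_eq_abs]
      refine (hgbound _).trans ?_
      refine (abs_add_le _ _).trans ?_
      rw [abs_mul, abs_of_nonneg (le_of_lt (lt_of_lt_of_le hsqrtpos (hσpos 0)))]
      simp only [Pi.add_apply]
      rw [abs_of_nonneg (by positivity : (0:ℝ) ≤ |mS + 0 * mZ| + σ 0 * |x|)]
    · exact ((hhc.measurable.comp (by fun_prop)).mul (by fun_prop)).aestronglyMeasurable
    · filter_upwards with x ε hε
      rw [Real.norm_eq_abs, abs_mul]
      have hε1 : |ε| ≤ 1 := by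
        rw [Metric.mem_ball, Real.dist_eq, sub_zero] at hε
        exact hε.le
      have hb1 : |ε * vZ / σ ε| ≤ vZ / Real.sqrt vS := by
        rw [abs_div, abs_mul, abs_of_nonneg hvZ,
          abs_of_nonneg (le_of_lt (lt_of_lt_of_le hsqrtpos (hσpos ε)))]
        exact div_le_div₀ hvZ (by nlinarith [abs_nonneg ε]) hsqrtpos (hσpos ε)
      calc |h (mS + ε * mZ + σ ε * x)| * |mZ + ε * vZ / σ ε * x|
          ≤ 1 * |mZ + ε * vZ / σ ε * x| :=
            mul_le_mul_of_nonneg_right (hh0 _) (abs_nonneg _)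
        _ ≤ |mZ| + vZ / Real.sqrt vS * |x| := by
            rw [one_mul]
            refine (abs_add_le _ _).trans ?_
            gcongr
            rw [abs_mul]
            exact mul_le_mul_of_nonneg_right hb1 (abs_nonneg x)
    · filter_upwards with x ε _
      have base : HasDerivAt (fun ε : ℝ => mS + ε * mZ + σ ε * x)
          (mZ + (ε * vZ / σ ε) * x) ε :=
        (((hasDerivAt_mul_const mZ).const_add mS).add ((hσderiv ε).mul_const x))
      exact (hg _).comp ε base
  -- combine
  have hFG : (fun ε => ∫ ω, g (S ω + ε * Z ω) ∂ℙ)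
      = (fun ε => ∫ x, g (mS + ε * mZ + σ ε * x) ∂γ) := funext hFeq
  have huniq := (hFG ▸ hd1).unique hd2
  have hσ0 : σ 0 = Real.sqrt vS := by simp [hσdef]
  simp only [zero_mul, add_zero, zero_div, hσ0] at huniq
  have h5 : ∫ x, h (mS + Real.sqrt vS * x) ∂γ = ∫ ω, h (S ω) ∂ℙ := by
    have hco : Real.sqrt ((vS.toNNReal : ℝ≥0) : ℝ) = Real.sqrt vS := by
      rw [Real.coe_toNNReal _ hvS.le]
    calc ∫ x, h (mS + Real.sqrt vS * x) ∂γ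
        = ∫ y, h y ∂(Measure.map (fun x => mS + Real.sqrt ((vS.toNNReal : ℝ≥0):ℝ) * x) γ) := by
          rw [hco]
          exact (integral_map (by fun_prop) hhc.aestronglyMeasurable).symm
      _ = ∫ y, h y ∂(Measure.map S ℙ) := by rw [← gaussianReal_eq_map, hSlaw]
      _ = ∫ ω, h (S ω) ∂ℙ := integral_map hSm.aemeasurable hhc.aestronglyMeasurable
  rw [huniq, integral_mul_const, h5, mul_comm]

lemma key_factor [IsProbabilityMeasure (ℙ : Measure Ω)]
    (Z S : Ω → ℝ) (hZm : Measurable Z) (hSm : Measurable S)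
    (mZ mS vZ vS : ℝ) (hvZ : 0 ≤ vZ) (hvS : 0 < vS)
    (hlaw : ∀ a b : ℝ, Measure.map (fun ω => a * Z ω + b * S ω) ℙ
      = gaussianReal (a * mZ + b * mS) (Real.toNNReal (a^2 * vZ + b^2 * vS)))
    (c : ℝ) :
    ∫ ω in {ω | c ≤ S ω}, Z ω ∂ℙ = mZ * (ℙ {ω | c ≤ S ω}).toReal := by
  have hZint : Integrable Z ℙ := by
    have h1 := hlaw 1 0
    simp only [one_mul, zero_mul, add_zero, one_pow] at h1
    norm_num at h1
    exact integrable_of_map_gaussian hZm h1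
  have hSlaw : Measure.map S ℙ = gaussianReal mS (Real.toNNReal vS) := by
    have h1 := hlaw 0 1
    simp only [one_mul, zero_mul, zero_add, one_pow] at h1
    norm_num at h1
    exact h1
  set hn : ℕ → ℝ → ℝ := fun n s => min 1 (max 0 (n * (s - c))) with hndef
  have hcont : ∀ n, Continuous (hn n) := by
    intro n
    exact continuous_const.min (continuous_const.max (by fun_prop))
  have hnonneg : ∀ n s, 0 ≤ hn n s := fun n s => le_min zero_le_one (le_max_left _ _)
  have hbd : ∀ n s, |hn n s| ≤ 1 := by
    intro n s
    rw [abs_le]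
    exact ⟨by linarith [hnonneg n s], min_le_left _ _⟩
  have hid : ∀ n, ∫ ω, hn n (S ω) * Z ω ∂ℙ = mZ * ∫ ω, hn n (S ω) ∂ℙ := fun n =>
    key_identity_s17 Z S hZm hSm mZ mS vZ vS hvZ hvS hlaw (hn n) (hcont n) (hbd n)
  set ind : Ω → ℝ := ({ω | c < S ω}).indicator (fun _ => 1) with hinddef
  have hptw : ∀ ω, Tendsto (fun n : ℕ => hn n (S ω)) atTop (𝓝 (ind ω)) := by
    intro ω
    by_cases hlt : c < S ω
    · have hval : ind ω = 1 := by simp [hinddef, Set.indicator, hlt]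
      rw [hval]
      apply tendsto_atTop_of_eventually_const (i₀ := ⌈(S ω - c)⁻¹⌉₊)
      intro n hin
      have hp : (0:ℝ) < S ω - c := by linarith
      have h1le : 1 ≤ (n:ℝ) * (S ω - c) := by
        rw [← div_le_iff₀ hp, one_div]
        exact (Nat.ceil_le.1 hin)
      simp only [hndef]
      rw [max_eq_right (by linarith), min_eq_left h1le]
    · have hval : ind ω = 0 := by simp [hinddef, Set.indicator, hlt]
      rw [hval]
      have : ∀ n : ℕ, hn n (S ω) = 0 := by
        intro n
        simp only [hndef]
        rw [max_eq_left, min_eq_right zero_le_one]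
        apply mul_nonpos_of_nonneg_of_nonpos (Nat.cast_nonneg n)
        push_neg at hlt
        linarith
      simp only [this]
      exact tendsto_const_nhds
  have hindmeas : MeasurableSet {ω | c < S ω} := measurableSet_lt measurable_const hSm
  have hlemeas : MeasurableSet {ω | c ≤ S ω} := measurableSet_le measurable_const hSm
  have hlim1 : Tendsto (fun n => ∫ ω, hn n (S ω) * Z ω ∂ℙ) atTop
      (𝓝 (∫ ω, ind ω * Z ω ∂ℙ)) := by
    apply tendsto_integral_of_dominated_convergence (fun ω => |Z ω|)
      (fun n => (((hcont n).measurable.comp hSm).mul hZm).aestronglyMeasurable)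
      hZint.abs
    · intro n
      filter_upwards with ω
      rw [Real.norm_eq_abs, Pi.mul_apply, Function.comp_apply, abs_mul]
      calc |hn n (S ω)| * |Z ω| ≤ 1 * |Z ω| :=
          mul_le_mul_of_nonneg_right (hbd n _) (abs_nonneg _)
        _ = |Z ω| := one_mul _
    · filter_upwards with ω
      exact (hptw ω).mul_const _
  have hlim2 : Tendsto (fun n => ∫ ω, hn n (S ω) ∂ℙ) atTop (𝓝 (∫ ω, ind ω ∂ℙ)) := by
    apply tendsto_integral_of_dominated_convergence (fun _ => (1:ℝ))
      (fun n => ((hcont n).measurable.comp hSm).aestronglyMeasurable)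
      (integrable_const 1)
    · intro n
      filter_upwards with ω
      rw [Real.norm_eq_abs]
      exact hbd n _
    · filter_upwards with ω
      exact hptw ω
  have heqlim : ∫ ω, ind ω * Z ω ∂ℙ = mZ * ∫ ω, ind ω ∂ℙ := by
    apply tendsto_nhds_unique hlim1
    have := hlim2.const_mul mZ
    simp only [← hid] at this
    exact this
  -- identify the limits
  have hA : ∫ ω, ind ω * Z ω ∂ℙ = ∫ ω in {ω | c < S ω}, Z ω ∂ℙ := by
    rw [← integral_indicator hindmeas]
    congr 1
    funext ω
    simp only [hinddef, Set.indicator]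
    by_cases hmem : ω ∈ {ω | c < S ω} <;> simp [hmem]
  have hB : ∫ ω, ind ω ∂ℙ = (ℙ {ω | c < S ω}).toReal := by
    simp only [hinddef]
    rw [integral_indicator_const (1:ℝ) hindmeas]
    simp
    rfl
  -- from Ioi to Ici using no atom
  have hnull : ℙ {ω | S ω = c} = 0 := by
    have hpre : {ω | S ω = c} = S ⁻¹' {c} := rfl
    rw [hpre, ← Measure.map_apply hSm (measurableSet_singleton c), hSlaw]
    exact gaussianReal_singleton mS (by simp [Real.toNNReal_pos, hvS] : vS.toNNReal ≠ 0) c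
  have hae : {ω | c < S ω} =ᵐ[ℙ] {ω | c ≤ S ω} := by
    rw [Filter.eventuallyEq_set]
    have h1 : {ω | ¬ (c < S ω ↔ c ≤ S ω)} ⊆ {ω | S ω = c} := by
      intro ω hω
      simp only [Set.mem_setOf_eq] at *
      by_contra hne
      rcases lt_or_ge c (S ω) with h | h
      · exact hω ⟨fun _ => h.le, fun _ => h⟩
      · exact hω ⟨fun h2 => absurd h2 (not_lt.2 h), fun h2 => absurd (lt_of_le_of_ne h2 (Ne.symm hne)) (not_lt.2 h)⟩
    exact ae_iff.2 (measure_mono_null (by exact fun ω hω => h1 hω) hnull)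
  rw [← setIntegral_congr_set hae, ← hA, heqlim, hB]
  congr 1
  exact congrArg ENNReal.toReal (measure_congr hae)


end AuxLemmas

/-- Elliptical allocation formula in the multivariate normal case:
if `X ~ N(μ, Σ)` (characterized by all one-dimensional projections being Gaussian)
and `S = 𝟙ᵀX`, then
`ESC_α(X_j,S) = μ_j + (Σ𝟙)_j/(𝟙ᵀΣ𝟙) · (ES_α(S) - 𝟙ᵀμ)`. -/
theorem stmt17 [IsProbabilityMeasure (ℙ : Measure Ω)]
    (d : ℕ) (X : Fin d → Ω → ℝ)
    (hXmeas : ∀ i, Measurable (X i))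
    (μ : Fin d → ℝ) (Sig : Matrix (Fin d) (Fin d) ℝ) (hSig : Sig.PosDef)
    (hgauss : ∀ t : Fin d → ℝ,
      Measure.map (fun ω => ∑ i, t i * X i ω) ℙ
        = gaussianReal (∑ i, t i * μ i)
            (Real.toNNReal (∑ i, ∑ k, t i * Sig i k * t k)))
    (S : Ω → ℝ) (hS : ∀ ω, S ω = ∑ i, X i ω)
    (α : ℝ) (hα : α ∈ Ioo (0:ℝ) 1) :
    ∀ j : Fin d,
      (∫ ω in {ω | VaR α S ≤ S ω}, X j ω) / (ℙ {ω | VaR α S ≤ S ω}).toReal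
        = μ j + ((Sig *ᵥ fun _ => (1:ℝ)) j / ∑ i, (Sig *ᵥ fun _ => (1:ℝ)) i)
            * ((∫ ω in {ω | VaR α S ≤ S ω}, S ω) / (ℙ {ω | VaR α S ≤ S ω}).toReal
                - ∑ i, μ i) := by
  intro j
  have hSm : Measurable S := by
    have : S = fun ω => ∑ i, X i ω := funext hS
    rw [this]; exact Finset.measurable_sum _ fun i _ => hXmeas i
  set w : Fin d → ℝ := fun i => ∑ k, Sig i k with hwdef
  set V : ℝ := ∑ i, w i with hVdef
  have hmulVec : (Sig *ᵥ fun _ => (1:ℝ)) = w := by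
    funext i
    simp [Matrix.mulVec, dotProduct, hwdef]
  have hsym : ∀ i k, Sig k i = Sig i k := by
    intro i k
    have := hSig.1.apply i k
    simpa using this
  have hVpos : 0 < V := by
    have h1 : (fun _ => (1:ℝ)) ≠ (0 : Fin d → ℝ) := by
      intro h
      exact one_ne_zero (congrFun h j)
    have h2 := hSig.dotProduct_mulVec_pos h1
    have h3 : dotProduct (star (fun _ => (1:ℝ))) (Sig *ᵥ fun _ => (1:ℝ)) = V := by
      simp [dotProduct, hmulVec, hVdef]
    rwa [h3] at h2
  set β : ℝ := w j / V with hβdef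
  set t : Fin d → ℝ := fun i => (if i = j then 1 else 0) - β with htdef
  set Z : Ω → ℝ := fun ω => X j ω - β * S ω with hZdef
  have hZm : Measurable Z := (hXmeas j).sub (hSm.const_mul β)
  have hZt : ∀ ω, Z ω = ∑ i, t i * X i ω := by
    intro ω
    simp only [htdef, sub_mul, Finset.sum_sub_distrib, ite_mul, one_mul, zero_mul]
    rw [Finset.sum_ite_eq' Finset.univ j (fun i => X i ω)]
    simp [hZdef, hS ω, Finset.mul_sum]
  set mS : ℝ := ∑ i, μ i with hmSdef
  set mZ : ℝ := ∑ i, t i * μ i with hmZdef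
  have hmZ : mZ = μ j - β * mS := by
    simp only [hmZdef, htdef, sub_mul, Finset.sum_sub_distrib, ite_mul, one_mul, zero_mul]
    rw [Finset.sum_ite_eq' Finset.univ j μ]
    simp [hmSdef, Finset.mul_sum]
  set vZ : ℝ := ∑ i, ∑ k, t i * Sig i k * t k with hvZdef
  have hvZ : 0 ≤ vZ := by
    have h2 := hSig.posSemidef.dotProduct_mulVec_nonneg t
    simp only [dotProduct, Matrix.mulVec, star_trivial, Finset.mul_sum] at h2
    rw [hvZdef]
    refine le_trans h2 (le_of_eq ?_)
    exact Finset.sum_congr rfl fun i _ => Finset.sum_congr rfl fun k _ => by ring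
  have htw : ∑ i, t i * w i = 0 := by
    simp only [htdef, sub_mul, Finset.sum_sub_distrib, ite_mul, one_mul, zero_mul]
    rw [Finset.sum_ite_eq' Finset.univ j w]
    simp only [Finset.mem_univ, if_true]
    rw [← Finset.mul_sum, ← hVdef, hβdef]
    have := hVpos.ne'
    field_simp
    ring
  have hrow : ∑ i, ∑ k, t i * Sig i k = 0 := by
    rw [← htw]
    exact Finset.sum_congr rfl fun i _ => by rw [← Finset.mul_sum]
  have hcol : ∑ i, ∑ k, Sig i k * t k = 0 := by
    rw [Finset.sum_comm]
    rw [← htw]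
    refine Finset.sum_congr rfl fun k _ => ?_
    rw [← Finset.sum_mul, mul_comm]
    congr 1
    exact Finset.sum_congr rfl fun i _ => hsym k i
  have hlaw : ∀ a b : ℝ, Measure.map (fun ω => a * Z ω + b * S ω) ℙ
      = gaussianReal (a * mZ + b * mS) (Real.toNNReal (a^2 * vZ + b^2 * V)) := by
    intro a b
    set u : Fin d → ℝ := fun i => a * t i + b with hudef
    have hfun : (fun ω => a * Z ω + b * S ω) = fun ω => ∑ i, u i * X i ω := by
      funext ω
      simp only [hudef, add_mul, Finset.sum_add_distrib]
      rw [hZt ω, hS ω, Finset.mul_sum, Finset.mul_sum]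
      congr 1
      · exact Finset.sum_congr rfl fun i _ => by ring
    rw [hfun, hgauss u]
    congr 1
    · simp only [hudef, add_mul, Finset.sum_add_distrib]
      rw [hmZdef, Finset.mul_sum, hmSdef, Finset.mul_sum]
      congr 1
      · exact Finset.sum_congr rfl fun i _ => by ring
    · congr 1
      have hsum4 : ∑ i, ∑ k, u i * Sig i k * u k
          = a^2 * (∑ i, ∑ k, t i * Sig i k * t k) + (a*b) * (∑ i, ∑ k, t i * Sig i k)
            + (a*b) * (∑ i, ∑ k, Sig i k * t k) + b^2 * (∑ i, ∑ k, Sig i k) := by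
        rw [Finset.mul_sum, Finset.mul_sum, Finset.mul_sum, Finset.mul_sum,
          ← Finset.sum_add_distrib, ← Finset.sum_add_distrib, ← Finset.sum_add_distrib]
        refine Finset.sum_congr rfl fun i _ => ?_
        rw [Finset.mul_sum, Finset.mul_sum, Finset.mul_sum, Finset.mul_sum,
          ← Finset.sum_add_distrib, ← Finset.sum_add_distrib, ← Finset.sum_add_distrib]
        exact Finset.sum_congr rfl fun k _ => by simp only [hudef]; ring
      have hVsum : ∑ i, ∑ k, Sig i k = V := by
        rw [hVdef]
      rw [hsum4, hrow, hcol, ← hvZdef, hVsum]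
      ring
  set c : ℝ := VaR α S with hcdef
  set A : Set Ω := {ω | c ≤ S ω} with hAdef
  have hkey : ∫ ω in A, Z ω ∂ℙ = mZ * (ℙ A).toReal :=
    key_factor Z S hZm hSm mZ mS vZ V hvZ hVpos hlaw c
  -- positivity of p
  have hApos : 0 < (ℙ A).toReal := by
    have hA1 : ℙ A = (Measure.map S ℙ) (Ici c) := by
      rw [Measure.map_apply hSm measurableSet_Ici]
      rfl
    have hSlaw : Measure.map S ℙ = gaussianReal mS (Real.toNNReal V) := by
      have h1 := hlaw 0 1
      simp only [one_mul, zero_mul, zero_add, one_pow] at h1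
      norm_num at h1
      exact h1
    have h2 : 0 < ℙ A := by
      rw [hA1, hSlaw]
      exact gaussianReal_Ici_pos mS (by simp [Real.toNNReal_pos, hVpos]) c
    exact ENNReal.toReal_pos h2.ne' (measure_ne_top _ _)
  have hp : (ℙ A).toReal ≠ 0 := hApos.ne'
  -- integrability
  have hZint : Integrable Z ℙ := by
    have h1 := hlaw 1 0
    simp only [one_mul, zero_mul, add_zero, one_pow] at h1
    norm_num at h1
    exact integrable_of_map_gaussian hZm h1
  have hSint : Integrable S ℙ := by
    have h1 := hlaw 0 1
    simp only [one_mul, zero_mul, zero_add, one_pow] at h1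
    norm_num at h1
    exact integrable_of_map_gaussian hSm h1
  have hsplit : ∫ ω in A, X j ω ∂ℙ = (∫ ω in A, Z ω ∂ℙ) + β * ∫ ω in A, S ω ∂ℙ := by
    have hXj : ∀ ω, X j ω = Z ω + β * S ω := by
      intro ω; simp [hZdef]
    calc ∫ ω in A, X j ω ∂ℙ = ∫ ω in A, (Z ω + β * S ω) ∂ℙ := by
          exact integral_congr_ae (Filter.Eventually.of_forall fun ω => hXj ω)
      _ = (∫ ω in A, Z ω ∂ℙ) + ∫ ω in A, β * S ω ∂ℙ :=
          integral_add hZint.integrableOn (hSint.integrableOn.const_mul β)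
      _ = (∫ ω in A, Z ω ∂ℙ) + β * ∫ ω in A, S ω ∂ℙ := by rw [integral_const_mul]
  rw [hmulVec, ← hVdef, ← hβdef, hsplit, hkey, hmZ]
  field_simp
  ring
end
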